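/- arXiv:2410.00611 — 6 statements merged into one kernel-verified Lean document; each statement's English description precedes it below -/
import Mathlib

section
/- Let p be a prime, n, m positive integers, and F : 𝔽_p^n → 𝔽_p^m any function. For each β ∈ 𝔽_p^m with |F⁻¹(β)| > 0 one has p^n/|im(F)| − Ξ(F) ≤ |F⁻¹(β)| ≤ p^n/|im(F)| + Ξ(F). Moreover, if some β attains one of these two bounds with equality, then |F⁻¹(α)| = (p^n − |F⁻¹(β)|)/(|im(F)| − 1) for every α ∈ im(F) with α ≠ β. -/
open Finset

/-- The Walsh transform of `F : 𝔽_p^n → 𝔽_p^m` at `(b, a)`. -/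
noncomputable def walsh (p n m : ℕ) [NeZero p] (F : (Fin n → ZMod p) → (Fin m → ZMod p))
    (b : Fin m → ZMod p) (a : Fin n → ZMod p) : ℂ :=
  ∑ x : Fin n → ZMod p,
    Complex.exp (2 * Real.pi * Complex.I *
      ((((∑ i, b i * F x i) - ∑ i, a i * x i).val : ℤ) : ℂ) / p)

/-- The imbalance `Nb_F = p^{-m} ∑_{b ≠ 0} |W_F(b,0)|²`. -/
noncomputable def imbalance (p n m : ℕ) [NeZero p]
    (F : (Fin n → ZMod p) → (Fin m → ZMod p)) : ℝ :=
  ((p : ℝ) ^ m)⁻¹ *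
    ∑ b ∈ univ.filter (fun b : Fin m → ZMod p => b ≠ 0),
      ‖walsh p n m F b 0‖ ^ 2

/-- The size of the preimage set `F⁻¹(β)`. -/
def fiberCard (p n m : ℕ) [NeZero p] (F : (Fin n → ZMod p) → (Fin m → ZMod p))
    (β : Fin m → ZMod p) : ℕ :=
  (univ.filter fun x => F x = β).card

/-- The size of the image set of `F`. -/
def imSize (p n m : ℕ) [NeZero p] (F : (Fin n → ZMod p) → (Fin m → ZMod p)) : ℕ :=
  (univ.image F).card

/-- The imbalance defect
`Ξ(F) = sqrt((|im F| - 1)(|im F|·Nb_F - p^{2n-m}(p^m - |im F|)))/|im F|`. -/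
noncomputable def xi (p n m : ℕ) [NeZero p]
    (F : (Fin n → ZMod p) → (Fin m → ZMod p)) : ℝ :=
  Real.sqrt (((imSize p n m F : ℝ) - 1) *
      ((imSize p n m F : ℝ) * imbalance p n m F -
        (p : ℝ) ^ (2 * (n : ℤ) - (m : ℤ)) * ((p : ℝ) ^ m - (imSize p n m F : ℝ)))) /
    (imSize p n m F : ℝ)

lemma e_apply (p : ℕ) [NeZero p] (z : ZMod p) :
    ZMod.stdAddChar z = Complex.exp (2 * Real.pi * Complex.I * ((z.val : ℤ) : ℂ) / p) := by
  have h : ((z.val : ℤ) : ZMod p) = z := by push_cast; simp [ZMod.natCast_val, ZMod.cast_id]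
  calc ZMod.stdAddChar z = ZMod.stdAddChar ((z.val : ℤ) : ZMod p) := by rw [h]
    _ = _ := by rw [ZMod.stdAddChar_coe]

lemma e_conj (p : ℕ) [NeZero p] (z : ZMod p) :
    (starRingEnd ℂ) (ZMod.stdAddChar z) = ZMod.stdAddChar (-z) := by
  rw [ZMod.stdAddChar_apply, ZMod.stdAddChar_apply, AddChar.map_neg_eq_inv,
    Circle.coe_inv_eq_conj]

def dotHom (p m : ℕ) [NeZero p] (δ : Fin m → ZMod p) : (Fin m → ZMod p) →+ ZMod p where
  toFun b := ∑ i, b i * δ i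
  map_zero' := by simp
  map_add' b c := by simp [add_mul, Finset.sum_add_distrib]

lemma sum_char (p m : ℕ) [NeZero p] (hp : p.Prime) (δ : Fin m → ZMod p) :
    ∑ b : Fin m → ZMod p, ZMod.stdAddChar (∑ i, b i * δ i)
      = if δ = 0 then ((p : ℂ) ^ m) else 0 := by
  classical
  haveI : Fact p.Prime := ⟨hp⟩
  have h := AddChar.sum_eq_ite ((ZMod.stdAddChar (N := p)).compAddMonoidHom (dotHom p m δ))
  simp only [AddChar.compAddMonoidHom_apply] at h
  by_cases hδ : δ = 0
  · subst hδ
    rw [if_pos rfl]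
    simp [AddChar.map_zero_eq_one, card_univ, ZMod.card]
  · rw [if_neg hδ]
    have hne : ((ZMod.stdAddChar (N := p)).compAddMonoidHom (dotHom p m δ)) ≠ 0 := by
      obtain ⟨j, hj⟩ := Function.ne_iff.mp hδ
      rw [AddChar.ne_zero_iff]
      refine ⟨Pi.single j (δ j)⁻¹, ?_⟩
      have hdot : (dotHom p m δ) (Pi.single j (δ j)⁻¹) = 1 := by
        simp only [dotHom, AddMonoidHom.coe_mk, ZeroHom.coe_mk]
        rw [Finset.sum_eq_single j]
        · simp [inv_mul_cancel₀ hj]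
        · intro i _ hij; simp [Pi.single_eq_of_ne hij]
        · simp
      rw [AddChar.compAddMonoidHom_apply, hdot]
      intro hcontra
      have h01 : ZMod.stdAddChar (1 : ZMod p) = ZMod.stdAddChar (0 : ZMod p) := by
        rw [hcontra, AddChar.map_zero_eq_one]
      exact one_ne_zero (ZMod.injective_stdAddChar h01)
    rw [if_neg hne] at h
    simpa [dotHom] using h

lemma walsh_zero_right (p n m : ℕ) [NeZero p] (F : (Fin n → ZMod p) → (Fin m → ZMod p))
    (b : Fin m → ZMod p) :
    walsh p n m F b 0 = ∑ x : Fin n → ZMod p, ZMod.stdAddChar (∑ i, b i * F x i) := by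
  unfold walsh
  refine Finset.sum_congr rfl fun x _ => ?_
  rw [e_apply]
  congr 2
  simp

lemma parseval (p n m : ℕ) [NeZero p] (hp : p.Prime)
    (F : (Fin n → ZMod p) → (Fin m → ZMod p)) :
    ∑ b : Fin m → ZMod p, ‖walsh p n m F b 0‖ ^ 2
      = (p : ℝ) ^ m * ∑ β ∈ univ.image F, (fiberCard p n m F β : ℝ) ^ 2 := by
  classical
  have key : ∑ b : Fin m → ZMod p,
      walsh p n m F b 0 * (starRingEnd ℂ) (walsh p n m F b 0)
      = (p : ℂ) ^ m * ∑ β ∈ univ.image F, (fiberCard p n m F β : ℂ) ^ 2 := by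
    simp_rw [walsh_zero_right, map_sum, e_conj, Finset.sum_mul_sum,
      ← AddChar.map_add_eq_mul, ← sub_eq_add_neg]
    rw [Finset.sum_comm]
    have step1 : ∀ x : Fin n → ZMod p,
        ∑ b : Fin m → ZMod p, ∑ y : Fin n → ZMod p,
          ZMod.stdAddChar ((∑ i, b i * F x i) - ∑ i, b i * F y i)
        = (p : ℂ) ^ m * (fiberCard p n m F (F x) : ℂ) := by
      intro x
      rw [Finset.sum_comm]
      have inner : ∀ y : Fin n → ZMod p,
          ∑ b : Fin m → ZMod p,
            ZMod.stdAddChar ((∑ i, b i * F x i) - ∑ i, b i * F y i)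
          = if F x - F y = 0 then ((p : ℂ) ^ m) else 0 := by
        intro y
        rw [← sum_char p m hp (F x - F y)]
        refine Finset.sum_congr rfl fun b _ => ?_
        congr 1
        simp [mul_sub, Finset.sum_sub_distrib]
      simp_rw [inner]
      have : ∀ y : Fin n → ZMod p, (F x - F y = 0) ↔ (F y = F x) := by
        intro y; rw [sub_eq_zero, eq_comm]
      simp_rw [this]
      rw [Finset.sum_ite, Finset.sum_const, Finset.sum_const_zero, add_zero,
        nsmul_eq_mul, mul_comm]
      rfl
    simp_rw [step1, ← Finset.mul_sum]
    congr 1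
    rw [← Finset.sum_fiberwise_of_maps_to (fun x (_ : x ∈ univ) => mem_image_of_mem F (mem_univ x))
      (fun x => (fiberCard p n m F (F x) : ℂ))]
    refine Finset.sum_congr rfl fun β hβ => ?_
    rw [Finset.sum_congr rfl (fun x hx => by rw [(Finset.mem_filter.mp hx).2] :
      ∀ x ∈ univ.filter (fun x => F x = β), (fiberCard p n m F (F x) : ℂ) = (fiberCard p n m F β : ℂ)),
      Finset.sum_const, nsmul_eq_mul, sq]
    rfl
  have cast1 : ((∑ b : Fin m → ZMod p, ‖walsh p n m F b 0‖ ^ 2 : ℝ) : ℂ)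
      = ∑ b : Fin m → ZMod p,
          walsh p n m F b 0 * (starRingEnd ℂ) (walsh p n m F b 0) := by
    push_cast
    refine Finset.sum_congr rfl fun b _ => ?_
    rw [Complex.mul_conj, ← Complex.sq_norm]
    push_cast
    ring
  apply Complex.ofReal_injective
  rw [cast1, key]
  push_cast
  ring

lemma walsh_zero_zero (p n m : ℕ) [NeZero p] (F : (Fin n → ZMod p) → (Fin m → ZMod p)) :
    walsh p n m F 0 0 = (p : ℂ) ^ n := by
  rw [walsh_zero_right]
  simp [AddChar.map_zero_eq_one, card_univ, ZMod.card]

lemma sum_fiber (p n m : ℕ) [NeZero p] (F : (Fin n → ZMod p) → (Fin m → ZMod p)) :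
    ∑ β ∈ univ.image F, fiberCard p n m F β = p ^ n := by
  have h := Finset.card_eq_sum_card_image F (univ : Finset (Fin n → ZMod p))
  rw [card_univ] at h
  have : Fintype.card (Fin n → ZMod p) = p ^ n := by simp [ZMod.card]
  rw [this] at h
  exact h.symm

lemma imbalance_eq (p n m : ℕ) [NeZero p] (hp : p.Prime)
    (F : (Fin n → ZMod p) → (Fin m → ZMod p)) :
    imbalance p n m F
      = (∑ β ∈ univ.image F, (fiberCard p n m F β : ℝ) ^ 2)
        - (p : ℝ) ^ (2 * n) / (p : ℝ) ^ m := by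
  have hp0 : (0 : ℝ) < (p : ℝ) := by exact_mod_cast hp.pos
  have hpm : ((p : ℝ) ^ m) ≠ 0 := by positivity
  unfold imbalance
  have hfilter : (univ.filter (fun b : Fin m → ZMod p => b ≠ 0)) = univ.erase 0 := by
    rw [Finset.filter_ne']
  rw [hfilter, Finset.sum_erase_eq_sub (mem_univ 0), parseval p n m hp F,
    walsh_zero_zero]
  have habs : ‖(p : ℂ) ^ n‖ ^ 2 = (p : ℝ) ^ (2 * n) := by
    rw [norm_pow]
    norm_num [Complex.norm_natCast]
    ring
  rw [habs]
  field_simp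

lemma sq_identity {α : Type*} (s : Finset α) (f : α → ℝ) :
    ∑ a ∈ s, ((s.card : ℝ) * f a - ∑ a ∈ s, f a) ^ 2
      = (s.card : ℝ) * ((s.card : ℝ) * ∑ a ∈ s, f a ^ 2 - (∑ a ∈ s, f a) ^ 2) := by
  simp only [sub_sq, mul_pow, Finset.sum_add_distrib, Finset.sum_sub_distrib,
    ← Finset.sum_mul, ← Finset.mul_sum, Finset.sum_const, nsmul_eq_mul]
  ring

lemma cs_bound {α : Type*} [DecidableEq α] (s : Finset α) (f : α → ℝ) {β : α} (hβ : β ∈ s) :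
    ((s.card : ℝ) * f β - ∑ a ∈ s, f a) ^ 2
      ≤ ((s.card : ℝ) - 1) * ((s.card : ℝ) * ∑ a ∈ s, f a ^ 2 - (∑ a ∈ s, f a) ^ 2) := by
  classical
  set t := s.erase β with ht
  have hA : (∑ a ∈ t, f a) + f β = ∑ a ∈ s, f a := Finset.sum_erase_add s f hβ
  have hB : (∑ a ∈ t, f a ^ 2) + f β ^ 2 = ∑ a ∈ s, f a ^ 2 :=
    Finset.sum_erase_add s (fun a => f a ^ 2) hβ
  have hcard : (s.card : ℝ) = (t.card : ℝ) + 1 := by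
    rw [ht, Finset.card_erase_of_mem hβ]
    have h1 : 1 ≤ s.card := Finset.card_pos.mpr ⟨β, hβ⟩
    push_cast [Nat.cast_sub h1]
    ring
  rcases Nat.eq_zero_or_pos t.card with h0 | hpos
  · have hte : t = ∅ := Finset.card_eq_zero.mp h0
    rw [hte] at hA hB
    simp only [Finset.sum_empty, zero_add] at hA hB
    rw [h0] at hcard
    rw [hcard, ← hA, ← hB]
    norm_num
  · have hid := sq_identity t f
    have hsq : (0 : ℝ) ≤ ∑ a ∈ t, ((t.card : ℝ) * f a - ∑ a ∈ t, f a) ^ 2 :=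
      Finset.sum_nonneg fun a _ => sq_nonneg _
    have hq : 0 ≤ (t.card : ℝ) * ∑ a ∈ t, f a ^ 2 - (∑ a ∈ t, f a) ^ 2 := by
      have htc : (0 : ℝ) < (t.card : ℝ) := by exact_mod_cast hpos
      nlinarith [hid, hsq]
    have hprod : 0 ≤ ((t.card : ℝ) + 1) *
        ((t.card : ℝ) * ∑ a ∈ t, f a ^ 2 - (∑ a ∈ t, f a) ^ 2) := by positivity
    rw [← hA, ← hB, hcard]
    nlinarith [hprod]

lemma cs_eq {α : Type*} [DecidableEq α] (s : Finset α) (f : α → ℝ) {β : α} (hβ : β ∈ s)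
    (heq : ((s.card : ℝ) * f β - ∑ a ∈ s, f a) ^ 2
      = ((s.card : ℝ) - 1) * ((s.card : ℝ) * ∑ a ∈ s, f a ^ 2 - (∑ a ∈ s, f a) ^ 2)) :
    ∀ γ ∈ s, γ ≠ β → f γ = ((∑ a ∈ s, f a) - f β) / ((s.card : ℝ) - 1) := by
  classical
  intro γ hγ hγβ
  set t := s.erase β with ht
  have hγt : γ ∈ t := Finset.mem_erase.mpr ⟨hγβ, hγ⟩
  have hA : (∑ a ∈ t, f a) + f β = ∑ a ∈ s, f a := Finset.sum_erase_add s f hβ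
  have hB : (∑ a ∈ t, f a ^ 2) + f β ^ 2 = ∑ a ∈ s, f a ^ 2 :=
    Finset.sum_erase_add s (fun a => f a ^ 2) hβ
  have hcard : (s.card : ℝ) = (t.card : ℝ) + 1 := by
    rw [ht, Finset.card_erase_of_mem hβ]
    have h1 : 1 ≤ s.card := Finset.card_pos.mpr ⟨β, hβ⟩
    push_cast [Nat.cast_sub h1]
    ring
  have htc : (0 : ℝ) < (t.card : ℝ) := by
    exact_mod_cast Finset.card_pos.mpr ⟨γ, hγt⟩
  -- from heq derive (t.card) * B' = A'^2  (equality in CS on t)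
  have h0 : ((t.card : ℝ) + 1) *
      ((t.card : ℝ) * ∑ a ∈ t, f a ^ 2 - (∑ a ∈ t, f a) ^ 2) = 0 := by
    rw [← hA, ← hB] at heq
    rw [hcard] at heq
    linear_combination -heq
  have h1 : (t.card : ℝ) * ∑ a ∈ t, f a ^ 2 - (∑ a ∈ t, f a) ^ 2 = 0 := by
    have : ((t.card : ℝ) + 1) ≠ 0 := by positivity
    exact (mul_eq_zero.mp h0).resolve_left this
  have hsum0 : ∑ a ∈ t, ((t.card : ℝ) * f a - ∑ a ∈ t, f a) ^ 2 = 0 := by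
    rw [sq_identity, h1, mul_zero]
  have hterm := (Finset.sum_eq_zero_iff_of_nonneg
    (fun a _ => sq_nonneg ((t.card : ℝ) * f a - ∑ a ∈ t, f a))).mp hsum0 γ hγt
  have hfγ : (t.card : ℝ) * f γ = ∑ a ∈ t, f a := by
    have := sq_eq_zero_iff.mp hterm
    linarith
  have hk1 : (s.card : ℝ) - 1 = (t.card : ℝ) := by linarith [hcard]
  rw [hk1, ← hA]
  field_simp
  linarith [hfγ]

lemma xi_eq (p n m : ℕ) [NeZero p] (hp : p.Prime)
    (F : (Fin n → ZMod p) → (Fin m → ZMod p)) :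
    xi p n m F
      = Real.sqrt (((imSize p n m F : ℝ) - 1) *
          ((imSize p n m F : ℝ) * ∑ β ∈ univ.image F, (fiberCard p n m F β : ℝ) ^ 2
            - ((p : ℝ) ^ n) ^ 2)) / (imSize p n m F : ℝ) := by
  have hp0 : (0 : ℝ) < (p : ℝ) := by exact_mod_cast hp.pos
  have hpm : ((p : ℝ) ^ m) ≠ 0 := by positivity
  unfold xi
  congr 3
  rw [imbalance_eq p n m hp F]
  have hz : (p : ℝ) ^ (2 * (n : ℤ) - (m : ℤ)) = (p : ℝ) ^ (2 * n) / (p : ℝ) ^ m := by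
    rw [show (2 * (n : ℤ) - (m : ℤ)) = ((2 * n : ℕ) : ℤ) - ((m : ℕ) : ℤ) by push_cast; ring,
      zpow_sub₀ hp0.ne', zpow_natCast, zpow_natCast]
  rw [hz]
  have h2 : (p : ℝ) ^ (2 * n) = ((p : ℝ) ^ n) ^ 2 := by rw [pow_mul, sq]; ring
  rw [h2]
  field_simp
  ring

theorem fiberCard_bounds_image (p n m : ℕ) [NeZero p] (hp : p.Prime) (hn : 0 < n) (hm : 0 < m)
    (F : (Fin n → ZMod p) → (Fin m → ZMod p)) :
    (∀ β : Fin m → ZMod p, 0 < fiberCard p n m F β →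
      (p : ℝ) ^ n / (imSize p n m F : ℝ) - xi p n m F ≤ (fiberCard p n m F β : ℝ) ∧
      (fiberCard p n m F β : ℝ) ≤ (p : ℝ) ^ n / (imSize p n m F : ℝ) + xi p n m F) ∧
    (∀ β : Fin m → ZMod p, 0 < fiberCard p n m F β →
      ((fiberCard p n m F β : ℝ) = (p : ℝ) ^ n / (imSize p n m F : ℝ) - xi p n m F ∨
       (fiberCard p n m F β : ℝ) = (p : ℝ) ^ n / (imSize p n m F : ℝ) + xi p n m F) →
      ∀ α ∈ univ.image F, α ≠ β →
        (fiberCard p n m F α : ℝ)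
          = ((p : ℝ) ^ n - (fiberCard p n m F β : ℝ)) / ((imSize p n m F : ℝ) - 1)) := by
  classical
  set T : Finset (Fin m → ZMod p) := univ.image F with hT
  set s : ℕ := imSize p n m F with hs
  have hsT : T.card = s := rfl
  set f : (Fin m → ZMod p) → ℝ := fun β => (fiberCard p n m F β : ℝ) with hf
  have hS1 : ∑ β ∈ T, f β = (p : ℝ) ^ n := by
    rw [hf, hT]
    simpa using congrArg (Nat.cast (R := ℝ)) (sum_fiber p n m F)
  have hs0 : 0 < s := by
    rw [hs, imSize]
    exact Finset.card_pos.mpr ((Finset.univ_nonempty).image F)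
  have hsR : (0 : ℝ) < (s : ℝ) := by exact_mod_cast hs0
  -- membership of positive fibers
  have hmem : ∀ β : Fin m → ZMod p, 0 < fiberCard p n m F β → β ∈ T := by
    intro β hβ
    obtain ⟨x, hx⟩ := Finset.card_pos.mp hβ
    rw [Finset.mem_filter] at hx
    rw [hT, ← hx.2]
    exact Finset.mem_image_of_mem F (mem_univ x)
  have hcardT : (T.card : ℝ) = (s : ℝ) := by rw [hsT]
  set S2 : ℝ := ∑ β ∈ T, f β ^ 2 with hS2
  set D : ℝ := ((s : ℝ) - 1) * ((s : ℝ) * S2 - ((p : ℝ) ^ n) ^ 2) with hD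
  have hxiv : xi p n m F = Real.sqrt D / (s : ℝ) := by
    rw [xi_eq p n m hp F]
  have hkey : ∀ β : Fin m → ZMod p, 0 < fiberCard p n m F β →
      ((s : ℝ) * f β - (p : ℝ) ^ n) ^ 2 ≤ D := by
    intro β hβ
    have h := cs_bound T f (hmem β hβ)
    rw [hcardT, hS1] at h
    exact h
  constructor
  · intro β hβ
    have h1 := hkey β hβ
    have habs : |(s : ℝ) * f β - (p : ℝ) ^ n| ≤ Real.sqrt D := by
      rw [← Real.sqrt_sq_eq_abs]
      exact Real.sqrt_le_sqrt h1
    obtain ⟨hl, hr⟩ := abs_le.mp habs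
    rw [hxiv]
    constructor
    · have e : (p : ℝ) ^ n / (s : ℝ) - Real.sqrt D / (s : ℝ)
          = ((p : ℝ) ^ n - Real.sqrt D) / (s : ℝ) := by ring
      rw [e, div_le_iff₀ hsR]
      nlinarith [hl]
    · have e : (p : ℝ) ^ n / (s : ℝ) + Real.sqrt D / (s : ℝ)
          = ((p : ℝ) ^ n + Real.sqrt D) / (s : ℝ) := by ring
      rw [e, le_div_iff₀ hsR]
      nlinarith [hr]
  · intro β hβ hcase α hα hαβ
    have h1 := hkey β hβ
    have hD0 : 0 ≤ D := le_trans (sq_nonneg _) h1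
    have e1 : (f β - (p : ℝ) ^ n / (s : ℝ)) ^ 2 = xi p n m F ^ 2 := by
      rcases hcase with h | h <;> rw [show (fiberCard p n m F β : ℝ) = f β from rfl] at h <;>
        rw [h] <;> ring
    have e2 : xi p n m F ^ 2 = D / (s : ℝ) ^ 2 := by
      rw [hxiv, div_pow, Real.sq_sqrt hD0]
    have e3 : ((s : ℝ) * f β - (p : ℝ) ^ n) ^ 2
        = (s : ℝ) ^ 2 * (f β - (p : ℝ) ^ n / (s : ℝ)) ^ 2 := by
      field_simp
    have heq0 : ((s : ℝ) * f β - (p : ℝ) ^ n) ^ 2 = D := by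
      rw [e3, e1, e2]
      field_simp
    have heq : ((T.card : ℝ) * f β - ∑ a ∈ T, f a) ^ 2
        = ((T.card : ℝ) - 1) * ((T.card : ℝ) * ∑ a ∈ T, f a ^ 2 - (∑ a ∈ T, f a) ^ 2) := by
      rw [hcardT, hS1]
      exact heq0
    have hres := cs_eq T f (hmem β hβ) heq α hα hαβ
    rw [hcardT, hS1] at hres
    exact hres
end

section
/- Let p be a prime, n, m positive integers with m ≤ n/2, and F : 𝔽_p^n → 𝔽_p^m any function. Then there exists an 𝔽_p-linear map L : 𝔽_p^n → 𝔽_p^m such that F + L is surjective. -/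
open Finset

private theorem fiber_count' (p n m : ℕ) [NeZero p] (hp : p.Prime)
    (z : Fin n → ZMod p) (hz : z ≠ 0) (v : Fin m → ZMod p) :
    (p ^ m) * (∑ M : Matrix (Fin m) (Fin n) (ZMod p),
        (if M.mulVec z = v then 1 else 0 : ℕ))
      = Fintype.card (Matrix (Fin m) (Fin n) (ZMod p)) := by
  classical
  haveI := Fact.mk hp
  obtain ⟨i, hi⟩ : ∃ i, z i ≠ 0 := by
    by_contra h; push_neg at h; exact hz (funext h)
  have hex : ∀ w : Fin m → ZMod p,
      ∃ M₀ : Matrix (Fin m) (Fin n) (ZMod p), M₀.mulVec z = w := by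
    intro w
    refine ⟨Matrix.of fun r c => if c = i then w r * (z i)⁻¹ else 0, ?_⟩
    funext r
    simp only [Matrix.mulVec, dotProduct, Matrix.of_apply, ite_mul, zero_mul]
    rw [Finset.sum_ite_eq' Finset.univ i (fun c => w r * (z i)⁻¹ * z c)]
    simp [mul_assoc, inv_mul_cancel₀ hi]
  have hc : ∀ w : Fin m → ZMod p,
      (∑ M : Matrix (Fin m) (Fin n) (ZMod p), (if M.mulVec z = w then 1 else 0 : ℕ))
      = ∑ M : Matrix (Fin m) (Fin n) (ZMod p), (if M.mulVec z = 0 then 1 else 0 : ℕ) := by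
    intro w
    obtain ⟨W, hW⟩ := hex w
    refine Fintype.sum_equiv (Equiv.subRight W) _ _ ?_
    intro M
    simp [Equiv.subRight, Matrix.sub_mulVec, hW, sub_eq_zero]
  have htot : (∑ w : Fin m → ZMod p, ∑ M : Matrix (Fin m) (Fin n) (ZMod p),
      (if M.mulVec z = w then 1 else 0 : ℕ))
      = Fintype.card (Matrix (Fin m) (Fin n) (ZMod p)) := by
    rw [Finset.sum_comm]
    rw [Fintype.card_eq_sum_ones]
    refine Finset.sum_congr rfl fun M _ => ?_
    rw [Finset.sum_ite_eq Finset.univ (M.mulVec z) (fun _ => 1)]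
    simp
  calc (p ^ m) * (∑ M : Matrix (Fin m) (Fin n) (ZMod p),
        (if M.mulVec z = v then 1 else 0 : ℕ))
      = ∑ w : Fin m → ZMod p, ∑ M : Matrix (Fin m) (Fin n) (ZMod p),
        (if M.mulVec z = w then 1 else 0 : ℕ) := by
        rw [Finset.sum_congr rfl (fun w _ => (hc w).trans (hc v).symm)]
        rw [Finset.sum_const, Finset.card_univ]
        simp [Fintype.card_fun, ZMod.card, mul_comm]
  _ = _ := htot

theorem exists_linear_add_surjective (p n m : ℕ) [NeZero p] (hp : p.Prime)
    (hn : 0 < n) (hm : 0 < m) (hmn : 2 * m ≤ n)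
    (F : (Fin n → ZMod p) → (Fin m → ZMod p)) :
    ∃ L : (Fin n → ZMod p) →ₗ[ZMod p] (Fin m → ZMod p),
      Function.Surjective (fun x => F x + L x) := by
  classical
  haveI := Fact.mk hp
  by_contra hcon
  push_neg at hcon
  set q : ℕ := p ^ m with hq
  set a : ℕ := p ^ n with ha
  set N : ℕ := Fintype.card (Matrix (Fin m) (Fin n) (ZMod p)) with hN
  have hNpos : 0 < N := Fintype.card_pos
  have hqpos : 0 < q := pow_pos hp.pos m
  have hapos : 0 < a := pow_pos hp.pos n
  obtain ⟨s, hs⟩ : ∃ s, q = s + 1 := ⟨q - 1, (Nat.succ_pred_eq_of_pos hqpos).symm⟩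
  have haq : q * q ≤ a := by
    calc q * q = p ^ (2 * m) := by rw [hq, two_mul, pow_add]
    _ ≤ a := Nat.pow_le_pow_right hp.pos hmn
  set G : Matrix (Fin m) (Fin n) (ZMod p) → (Fin n → ZMod p) → (Fin m → ZMod p) :=
    fun M x => F x + M.mulVec x with hG
  set r : Matrix (Fin m) (Fin n) (ZMod p) → (Fin m → ZMod p) → ℕ :=
    fun M y => ∑ x : Fin n → ZMod p, if G M x = y then 1 else 0 with hr
  have hcardq : Fintype.card (Fin m → ZMod p) = q := by
    simp [Fintype.card_fun, ZMod.card, hq]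
  have hcarda : Fintype.card (Fin n → ZMod p) = a := by
    simp [Fintype.card_fun, ZMod.card, ha]
  -- every G M misses some value
  have hns : ∀ M : Matrix (Fin m) (Fin n) (ZMod p), ∃ y, r M y = 0 := by
    intro M
    have h := hcon (Matrix.mulVecLin M)
    simp only [Function.Surjective, not_forall] at h
    obtain ⟨y, hy⟩ := h
    refine ⟨y, Finset.sum_eq_zero fun x _ => ?_⟩
    rw [if_neg]
    intro hxy
    exact hy ⟨x, by simpa [hG] using hxy⟩
  -- row sums
  have h1 : ∀ M, (∑ y : Fin m → ZMod p, r M y) = a := by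
    intro M
    rw [hr]
    rw [Finset.sum_comm]
    rw [← hcarda, Fintype.card_eq_sum_ones]
    refine Finset.sum_congr rfl fun x _ => ?_
    rw [Finset.sum_ite_eq Finset.univ (G M x) (fun _ => 1)]
    simp
  -- second moment as pair count
  have h2 : ∀ M, (∑ y : Fin m → ZMod p, (r M y) ^ 2)
      = ∑ x : Fin n → ZMod p, ∑ x' : Fin n → ZMod p,
          (if G M x' = G M x then 1 else 0 : ℕ) := by
    intro M
    have e1 : ∀ y, (r M y) ^ 2 = ∑ x : Fin n → ZMod p, ∑ x' : Fin n → ZMod p,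
        (if G M x = y then 1 else 0 : ℕ) * (if G M x' = y then 1 else 0 : ℕ) := by
      intro y
      rw [sq, hr, Finset.sum_mul_sum]
    rw [Finset.sum_congr rfl fun y _ => e1 y]
    rw [Finset.sum_comm]
    refine Finset.sum_congr rfl fun x _ => ?_
    rw [Finset.sum_comm]
    refine Finset.sum_congr rfl fun x' _ => ?_
    have e2 : ∀ y, (if G M x = y then 1 else 0 : ℕ) * (if G M x' = y then 1 else 0 : ℕ)
        = if G M x = y then (if G M x' = y then 1 else 0 : ℕ) else 0 := by
      intro y
      by_cases h : G M x = y <;> simp [h]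
    rw [Finset.sum_congr rfl fun y _ => e2 y]
    rw [Finset.sum_ite_eq Finset.univ (G M x) (fun y => if G M x' = y then (1:ℕ) else 0)]
    simp
  -- key count over M for each pair
  have key : ∀ x x' : Fin n → ZMod p,
      q * (∑ M : Matrix (Fin m) (Fin n) (ZMod p), (if G M x' = G M x then 1 else 0 : ℕ))
      = if x' = x then q * N else N := by
    intro x x'
    by_cases hxx : x' = x
    · subst hxx
      rw [if_pos rfl]
      congr 1
      calc (∑ M : Matrix (Fin m) (Fin n) (ZMod p), (if G M x' = G M x' then 1 else 0 : ℕ))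
          = ∑ _M : Matrix (Fin m) (Fin n) (ZMod p), (1:ℕ) :=
            Finset.sum_congr rfl fun M _ => if_pos rfl
        _ = N := by rw [Finset.sum_const, Finset.card_univ, smul_eq_mul, mul_one]
    · rw [if_neg hxx]
      have hz : x' - x ≠ 0 := sub_ne_zero.mpr hxx
      have hfc := fiber_count' p n m hp (x' - x) hz (F x - F x')
      rw [hN, hq, ← hfc]
      congr 1
      refine Finset.sum_congr rfl fun M _ => if_congr ?_ rfl rfl
      rw [Matrix.mulVec_sub]
      simp only [hG]
      constructor
      · intro h; linear_combination h
      · intro h; linear_combination h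
  -- total second moment
  have h3 : q * (∑ M : Matrix (Fin m) (Fin n) (ZMod p), ∑ y : Fin m → ZMod p, (r M y)^2)
      = a * (a * N + s * N) := by
    rw [Finset.sum_congr rfl fun M _ => h2 M]
    rw [Finset.sum_comm]
    rw [Finset.mul_sum]
    have hx : ∀ x : Fin n → ZMod p,
        q * (∑ M : Matrix (Fin m) (Fin n) (ZMod p), ∑ x' : Fin n → ZMod p,
            (if G M x' = G M x then 1 else 0 : ℕ)) = a * N + s * N := by
      intro x
      rw [Finset.sum_comm, Finset.mul_sum]
      rw [Finset.sum_congr rfl fun x' _ => key x x']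
      have e3 : ∀ x' : Fin n → ZMod p, (if x' = x then q * N else N)
          = N + (if x' = x then s * N else 0) := by
        intro x'
        by_cases h : x' = x <;> simp [h, hs, add_mul, add_comm]
      rw [Finset.sum_congr rfl fun x' _ => e3 x']
      rw [Finset.sum_add_distrib]
      rw [Finset.sum_ite_eq' Finset.univ x (fun _ => s * N)]
      rw [Finset.sum_const, Finset.card_univ, hcarda]
      simp [mul_comm]
    rw [Finset.sum_congr rfl fun x _ => hx x]
    rw [Finset.sum_const, Finset.card_univ, hcarda, smul_eq_mul]
  -- Cauchy-Schwarz for each failing M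
  have h4 : ∀ M : Matrix (Fin m) (Fin n) (ZMod p),
      a ^ 2 ≤ s * ∑ y : Fin m → ZMod p, (r M y)^2 := by
    intro M
    obtain ⟨y₀, hy₀⟩ := hns M
    have hsum : (∑ y ∈ Finset.univ.erase y₀, r M y) = a := by
      rw [Finset.sum_erase _ hy₀, h1 M]
    have hcs := Finset.sum_mul_sq_le_sq_mul_sq (R := ℕ)
      (Finset.univ.erase y₀) (fun y => r M y) (fun _ => 1)
    simp only [mul_one, one_pow] at hcs
    rw [hsum, Finset.sum_const, smul_eq_mul, mul_one] at hcs
    have hcard : (Finset.univ.erase y₀).card = s := by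
      rw [Finset.card_erase_of_mem (Finset.mem_univ _), Finset.card_univ, hcardq, hs]
      simp
    rw [hcard] at hcs
    calc a ^ 2 ≤ (∑ y ∈ Finset.univ.erase y₀, (r M y)^2) * s := hcs
      _ ≤ (∑ y : Fin m → ZMod p, (r M y)^2) * s := by
          apply Nat.mul_le_mul_right
          exact Finset.sum_le_sum_of_subset (Finset.erase_subset _ _)
      _ = s * ∑ y : Fin m → ZMod p, (r M y)^2 := mul_comm _ _
  -- sum over M and conclude
  have h5 : N * a ^ 2 ≤ s * ∑ M : Matrix (Fin m) (Fin n) (ZMod p),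
      ∑ y : Fin m → ZMod p, (r M y)^2 := by
    calc N * a ^ 2 = ∑ _M : Matrix (Fin m) (Fin n) (ZMod p), a ^ 2 := by
          rw [Finset.sum_const, Finset.card_univ, smul_eq_mul]
      _ ≤ ∑ M : Matrix (Fin m) (Fin n) (ZMod p), s * ∑ y : Fin m → ZMod p, (r M y)^2 :=
          Finset.sum_le_sum fun M _ => h4 M
      _ = s * ∑ M : Matrix (Fin m) (Fin n) (ZMod p), ∑ y : Fin m → ZMod p, (r M y)^2 :=
          (Finset.mul_sum _ _ _).symm
  have h6 : q * (N * a ^ 2) ≤ s * (a * (a * N + s * N)) := by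
    calc q * (N * a ^ 2) ≤ q * (s * ∑ M : Matrix (Fin m) (Fin n) (ZMod p),
          ∑ y : Fin m → ZMod p, (r M y)^2) := Nat.mul_le_mul_left q h5
      _ = s * (q * ∑ M : Matrix (Fin m) (Fin n) (ZMod p),
          ∑ y : Fin m → ZMod p, (r M y)^2) := by ring
      _ = s * (a * (a * N + s * N)) := by rw [h3]
  -- final arithmetic contradiction
  have hfin : (s+1) * a ^ 2 ≤ s * a ^ 2 + s ^ 2 * a := by
    have := h6
    rw [hs] at this
    have h7 : ((s+1) * (N * a ^ 2)) ≤ N * (s * a ^ 2 + s ^ 2 * a) := by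
      calc (s+1) * (N * a ^ 2) = (s+1) * (N * a ^ 2) := rfl
        _ ≤ s * (a * (a * N + s * N)) := this
        _ = N * (s * a ^ 2 + s ^ 2 * a) := by ring
    have h8 : N * ((s+1) * a ^ 2) ≤ N * (s * a ^ 2 + s ^ 2 * a) := by
      calc N * ((s+1) * a ^ 2) = (s+1) * (N * a ^ 2) := by ring
        _ ≤ N * (s * a ^ 2 + s ^ 2 * a) := h7
    exact Nat.le_of_mul_le_mul_left h8 hNpos
  have h9 : a ^ 2 ≤ s ^ 2 * a := by
    have : s * a ^ 2 + a ^ 2 ≤ s * a ^ 2 + s ^ 2 * a := by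
      calc s * a ^ 2 + a ^ 2 = (s+1) * a ^ 2 := by ring
        _ ≤ s * a ^ 2 + s ^ 2 * a := hfin
    exact Nat.le_of_add_le_add_left this
  have h10 : a ≤ s ^ 2 := by
    have : a * a ≤ s ^ 2 * a := by calc a * a = a ^ 2 := (sq a).symm
                                      _ ≤ s ^ 2 * a := h9
    exact Nat.le_of_mul_le_mul_right this hapos
  have h11 : (s+1) * (s+1) ≤ s ^ 2 := le_trans (hs ▸ haq) h10
  nlinarith [h11]
end

section
/- Let p be a prime, n a positive integer, t ≥ 1, and F : 𝔽_p^n → 𝔽_p^n a plateaued function that is (p^t + 1)-to-1. Then the differential uniformity of F is at least p^t. Moreover, the differential uniformity of F equals p^t if and only if F is differentially two-valued with value p^t, i.e., for every a ≠ 0 and every b, the number of solutions x of F(x+a) − F(x) = b lies in {0, p^t}. -/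
open Finset Complex

/-- The component `F_b` is `t`-plateaued: `|W_F(b,a)| ∈ {0, p^{(n+t)/2}}` for all `a`. -/
def IsTPlateaued (p n m : ℕ) [NeZero p] (F : (Fin n → ZMod p) → (Fin m → ZMod p))
    (b : Fin m → ZMod p) (t : ℕ) : Prop :=
  ∀ a : Fin n → ZMod p,
    ‖walsh p n m F b a‖ = 0 ∨
    ‖walsh p n m F b a‖ = Real.sqrt ((p : ℝ) ^ (n + t))

/-- `F` is plateaued: every nonzero component is `t_b`-plateaued for some `t_b`. -/
def IsPlateaued (p n m : ℕ) [NeZero p] (F : (Fin n → ZMod p) → (Fin m → ZMod p)) : Prop :=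
  ∀ b : Fin m → ZMod p, b ≠ 0 → ∃ t : ℕ, IsTPlateaued p n m F b t

/-- `F` is `d`-to-`1`: exactly one preimage set has size `1`, and every other nonempty
preimage set has size exactly `d`. -/
def IsDToOne (p n : ℕ) [NeZero p] (F : (Fin n → ZMod p) → (Fin n → ZMod p)) (d : ℕ) : Prop :=
  ∃ β : Fin n → ZMod p, fiberCard p n n F β = 1 ∧
    ∀ α : Fin n → ZMod p, α ≠ β → fiberCard p n n F α = 0 ∨ fiberCard p n n F α = d

/-- The number of solutions `x` of `F(x+a) - F(x) = b`. -/
def diffCount (p n : ℕ) [NeZero p] (F : (Fin n → ZMod p) → (Fin n → ZMod p))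
    (a b : Fin n → ZMod p) : ℕ :=
  (univ.filter fun x => F (x + a) - F x = b).card

/-- The differential uniformity `δ(F) = max_{a ≠ 0, b} #{x : F(x+a) - F(x) = b}`. -/
def diffUniformity (p n : ℕ) [NeZero p]
    (F : (Fin n → ZMod p) → (Fin n → ZMod p)) : ℕ :=
  ((univ ×ˢ univ).filter fun ab : (Fin n → ZMod p) × (Fin n → ZMod p) => ab.1 ≠ 0).sup
    fun ab => diffCount p n F ab.1 ab.2


namespace PDA
variable {p n : ℕ} [NeZero p]
set_option linter.unusedSectionVars false

local notation "ψ" => ZMod.stdAddChar (N := p)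

lemma psi_apply (c : ZMod p) :
    ψ c = Complex.exp (2 * Real.pi * Complex.I * ((c.val : ℤ) : ℂ) / p) := by
  have h : c = ((c.val : ℤ) : ZMod p) := by
    push_cast
    exact (ZMod.natCast_zmod_val c).symm
  rw [h, ZMod.stdAddChar_coe]
  norm_num

lemma psi_conj (c : ZMod p) : (starRingEnd ℂ) (ψ c) = ψ (-c) := by
  rw [AddChar.map_neg_eq_inv, ← Complex.inv_eq_conj]
  rw [ZMod.stdAddChar_apply]
  exact Circle.norm_coe _

lemma sum_psi_mul (t : ZMod p) : ∑ i : ZMod p, ψ (t * i) = if t = 0 then (p : ℂ) else 0 := by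
  split_ifs with h
  · simp only [h, zero_mul, AddChar.map_zero_eq_one, sum_const, card_univ, ZMod.card,
      nsmul_eq_mul, mul_one]
  · exact AddChar.sum_eq_zero_of_ne_one (ZMod.isPrimitive_stdAddChar p h)

lemma psi_map_sum {ι : Type*} (s : Finset ι) (f : ι → ZMod p) :
    ψ (∑ i ∈ s, f i) = ∏ i ∈ s, ψ (f i) := by
  induction s using Finset.cons_induction with
  | empty => simp
  | cons i s hi ih => rw [Finset.sum_cons, Finset.prod_cons, AddChar.map_add_eq_mul, ih]

/-- inner product -/
def ip (a x : Fin n → ZMod p) : ZMod p := ∑ i, a i * x i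

lemma ip_comm (a x : Fin n → ZMod p) : ip a x = ip x a := by
  unfold ip; exact Finset.sum_congr rfl fun i _ => mul_comm _ _

lemma ip_sub_right (c x y : Fin n → ZMod p) : ip c (x - y) = ip c x - ip c y := by
  unfold ip
  rw [← Finset.sum_sub_distrib]
  exact Finset.sum_congr rfl fun i _ => by simp [mul_sub]

lemma ip_zero_right (c : Fin n → ZMod p) : ip c 0 = 0 := by simp [ip]

lemma ip_zero_left (c : Fin n → ZMod p) : ip 0 c = 0 := by simp [ip]

lemma sum_psi_ip (c : Fin n → ZMod p) :
    ∑ x : Fin n → ZMod p, ψ (ip c x) = if c = 0 then (p : ℂ) ^ n else 0 := by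
  have h1 : ∀ x : Fin n → ZMod p, ψ (ip c x) = ∏ i, ψ (c i * x i) := fun x =>
    psi_map_sum univ fun i => c i * x i
  rw [Finset.sum_congr rfl fun x _ => h1 x]
  rw [← Fintype.piFinset_univ,
    ← Finset.prod_univ_sum (fun _ : Fin n => (univ : Finset (ZMod p)))
      (fun i j => ψ (c i * j))]
  by_cases hc : c = 0
  · subst hc
    simp [ZMod.card]
  · obtain ⟨i, hi⟩ : ∃ i, c i ≠ 0 := by
      by_contra h
      push_neg at h
      exact hc (funext h)
    rw [if_neg hc]
    refine Finset.prod_eq_zero (Finset.mem_univ i) ?_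
    rw [sum_psi_mul, if_neg hi]

lemma sum_psi_ip_left (c : Fin n → ZMod p) :
    ∑ x : Fin n → ZMod p, ψ (ip x c) = if c = 0 then (p : ℂ) ^ n else 0 := by
  rw [← sum_psi_ip c]
  exact Finset.sum_congr rfl fun x _ => by rw [ip_comm]

end PDA

namespace PDA
variable {p n : ℕ} [NeZero p]
set_option linter.unusedSectionVars false

local notation "ψ" => ZMod.stdAddChar (N := p)

lemma card_V : Fintype.card (Fin n → ZMod p) = p ^ n := by
  simp [ZMod.card]

lemma walsh_apply (F : (Fin n → ZMod p) → (Fin n → ZMod p)) (v u : Fin n → ZMod p) :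
    walsh p n n F v u = ∑ x : Fin n → ZMod p, ψ (ip v (F x) - ip u x) := by
  unfold walsh
  exact Finset.sum_congr rfl fun x _ => (psi_apply _).symm

lemma walsh_conj (F : (Fin n → ZMod p) → (Fin n → ZMod p)) (v u : Fin n → ZMod p) :
    (starRingEnd ℂ) (walsh p n n F v u) = ∑ y : Fin n → ZMod p, ψ (ip u y - ip v (F y)) := by
  rw [walsh_apply, map_sum]
  exact Finset.sum_congr rfl fun y _ => by rw [psi_conj, neg_sub]

lemma ww_expand (F : (Fin n → ZMod p) → (Fin n → ZMod p)) (v u : Fin n → ZMod p) :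
    walsh p n n F v u * (starRingEnd ℂ) (walsh p n n F v u)
      = ∑ x : Fin n → ZMod p, ∑ y : Fin n → ZMod p,
          ψ (ip v (F x - F y)) * ψ (ip u (y - x)) := by
  rw [walsh_conj, walsh_apply, Finset.sum_mul_sum]
  refine Finset.sum_congr rfl fun x _ => Finset.sum_congr rfl fun y _ => ?_
  rw [← AddChar.map_add_eq_mul, ← AddChar.map_add_eq_mul, ip_sub_right, ip_sub_right]
  congr 1
  abel

lemma parseval (F : (Fin n → ZMod p) → (Fin n → ZMod p)) (v : Fin n → ZMod p) :
    ∑ u : Fin n → ZMod p, walsh p n n F v u * (starRingEnd ℂ) (walsh p n n F v u)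
      = (p : ℂ) ^ (2 * n) := by
  simp only [ww_expand]
  rw [Finset.sum_comm]
  have step : ∀ x : Fin n → ZMod p,
      (∑ u : Fin n → ZMod p, ∑ y : Fin n → ZMod p,
        ψ (ip v (F x - F y)) * ψ (ip u (y - x))) = (p : ℂ) ^ n := by
    intro x
    rw [Finset.sum_comm]
    have h1 : ∀ y : Fin n → ZMod p,
        (∑ u : Fin n → ZMod p, ψ (ip v (F x - F y)) * ψ (ip u (y - x)))
          = ψ (ip v (F x - F y)) * (if y - x = 0 then (p : ℂ) ^ n else 0) := by
      intro y
      rw [← Finset.mul_sum, sum_psi_ip_left]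
    rw [Finset.sum_congr rfl fun y _ => h1 y]
    simp only [sub_eq_zero, mul_ite, mul_zero]
    rw [Finset.sum_ite_eq' univ x (fun y => ψ (ip v (F x - F y)) * (p : ℂ) ^ n)]
    simp [ip_zero_right]
  rw [Finset.sum_congr rfl fun x _ => step x]
  rw [Finset.sum_const, card_univ, card_V]
  rw [nsmul_eq_mul]
  push_cast
  ring

end PDA

namespace PDA
variable {p n : ℕ} [NeZero p]
set_option linter.unusedSectionVars false
set_option maxHeartbeats 1000000

local notation "ψ" => ZMod.stdAddChar (N := p)

lemma ip_add_right (c x y : Fin n → ZMod p) : ip c (x + y) = ip c x + ip c y := by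
  unfold ip
  rw [← Finset.sum_add_distrib]
  exact Finset.sum_congr rfl fun i _ => by simp [mul_add]

lemma ww_expand' (F : (Fin n → ZMod p) → (Fin n → ZMod p)) (v u : Fin n → ZMod p) :
    walsh p n n F v u * (starRingEnd ℂ) (walsh p n n F v u)
      = ∑ q : (Fin n → ZMod p) × (Fin n → ZMod p),
          ψ (ip v (F q.1 - F q.2)) * ψ (ip u (q.2 - q.1)) := by
  rw [ww_expand, ← Fintype.sum_prod_type
    (f := fun q : (Fin n → ZMod p) × (Fin n → ZMod p) =>
      ψ (ip v (F q.1 - F q.2)) * ψ (ip u (q.2 - q.1)))]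

lemma fourth_moment (F : (Fin n → ZMod p) → (Fin n → ZMod p)) :
    ∑ v : Fin n → ZMod p, ∑ u : Fin n → ZMod p,
      (walsh p n n F v u * (starRingEnd ℂ) (walsh p n n F v u))
        * (walsh p n n F v u * (starRingEnd ℂ) (walsh p n n F v u))
    = ∑ q : (Fin n → ZMod p) × (Fin n → ZMod p),
        ∑ r : (Fin n → ZMod p) × (Fin n → ZMod p),
        (if F q.1 - F q.2 + (F r.1 - F r.2) = 0 then (p : ℂ) ^ n else 0)
          * (if q.2 - q.1 + (r.2 - r.1) = 0 then (p : ℂ) ^ n else 0) := by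
  have hterm : ∀ v u (q r : (Fin n → ZMod p) × (Fin n → ZMod p)),
      (ψ (ip v (F q.1 - F q.2)) * ψ (ip u (q.2 - q.1)))
        * (ψ (ip v (F r.1 - F r.2)) * ψ (ip u (r.2 - r.1)))
      = ψ (ip v (F q.1 - F q.2 + (F r.1 - F r.2))) * ψ (ip u (q.2 - q.1 + (r.2 - r.1))) := by
    intro v u q r
    rw [ip_add_right, ip_add_right, AddChar.map_add_eq_mul, AddChar.map_add_eq_mul]
    ring
  have hexp : ∀ v u, (walsh p n n F v u * (starRingEnd ℂ) (walsh p n n F v u))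
        * (walsh p n n F v u * (starRingEnd ℂ) (walsh p n n F v u))
      = ∑ q : (Fin n → ZMod p) × (Fin n → ZMod p),
        ∑ r : (Fin n → ZMod p) × (Fin n → ZMod p),
        ψ (ip v (F q.1 - F q.2 + (F r.1 - F r.2))) * ψ (ip u (q.2 - q.1 + (r.2 - r.1))) := by
    intro v u
    rw [ww_expand', Finset.sum_mul_sum]
    exact Finset.sum_congr rfl fun q _ => Finset.sum_congr rfl fun r _ => hterm v u q r
  simp only [hexp]
  -- now swap ∑ v ∑ u ∑ q ∑ r to ∑ q ∑ r ∑ v ∑ u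
  have swap1 : ∀ v : Fin n → ZMod p,
      (∑ u : Fin n → ZMod p, ∑ q : (Fin n → ZMod p) × (Fin n → ZMod p),
        ∑ r : (Fin n → ZMod p) × (Fin n → ZMod p),
          ψ (ip v (F q.1 - F q.2 + (F r.1 - F r.2))) * ψ (ip u (q.2 - q.1 + (r.2 - r.1))))
      = ∑ q : (Fin n → ZMod p) × (Fin n → ZMod p),
        ∑ r : (Fin n → ZMod p) × (Fin n → ZMod p),
          ψ (ip v (F q.1 - F q.2 + (F r.1 - F r.2)))
            * (if q.2 - q.1 + (r.2 - r.1) = 0 then (p : ℂ) ^ n else 0) := by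
    intro v
    rw [Finset.sum_comm]
    refine Finset.sum_congr rfl fun q _ => ?_
    rw [Finset.sum_comm]
    refine Finset.sum_congr rfl fun r _ => ?_
    rw [← Finset.mul_sum, sum_psi_ip_left]
  simp only [swap1]
  rw [Finset.sum_comm]
  refine Finset.sum_congr rfl fun q _ => ?_
  rw [Finset.sum_comm]
  refine Finset.sum_congr rfl fun r _ => ?_
  rw [← Finset.sum_mul, sum_psi_ip_left]

end PDA

namespace PDA
variable {p n : ℕ} [NeZero p]
set_option linter.unusedSectionVars false
set_option maxHeartbeats 1000000

local notation "ψ" => ZMod.stdAddChar (N := p)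
local notation "V" => (Fin n → ZMod p)

lemma diffCount_eq (F : V → V) (a b : V) :
    diffCount p n F a b = ∑ x : V, if F (x + a) - F x = b then 1 else 0 :=
  Finset.card_filter _ _

lemma fiberCard_eq (F : V → V) (β : V) :
    fiberCard p n n F β = ∑ x : V, if F x = β then 1 else 0 :=
  Finset.card_filter _ _

lemma sum_diffCount (F : V → V) (a : V) : ∑ b : V, diffCount p n F a b = p ^ n := by
  simp only [diffCount_eq]
  rw [Finset.sum_comm]
  have h1 : ∀ x : V, (∑ b : V, if F (x + a) - F x = b then 1 else 0) = 1 := by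
    intro x
    rw [Finset.sum_ite_eq univ (F (x + a) - F x) (fun _ => 1)]
    simp
  rw [Finset.sum_congr rfl fun x _ => h1 x]
  simp [card_V]

lemma diffCount_zero (F : V → V) (b : V) :
    diffCount p n F 0 b = if b = 0 then p ^ n else 0 := by
  rw [diffCount_eq]
  simp only [add_zero, sub_self]
  by_cases hb : b = 0
  · subst hb
    simp [card_V]
  · rw [if_neg hb]
    rw [Finset.sum_eq_zero]
    intro x _
    rw [if_neg fun h => hb h.symm]

lemma sum_sq_fiberCard (F : V → V) :
    ∑ β : V, (fiberCard p n n F β) ^ 2 = ∑ x : V, ∑ y : V, if F y = F x then 1 else 0 := by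
  simp only [fiberCard_eq, sq, Finset.sum_mul_sum]
  rw [Finset.sum_comm]
  refine Finset.sum_congr rfl fun x _ => ?_
  rw [Finset.sum_comm]
  refine Finset.sum_congr rfl fun y _ => ?_
  simp only [ite_mul, one_mul, zero_mul, ← ite_and]
  rw [Finset.sum_eq_single (F x)]
  · simp [eq_comm]
  · intro β _ hβ
    rw [if_neg fun h => hβ h.1.symm]
  · intro h
    exact absurd (Finset.mem_univ _) h

lemma sum_sq_diffCount (F : V → V) (a : V) :
    ∑ b : V, (diffCount p n F a b) ^ 2
      = ∑ y : V, ∑ z : V, if F (z + a) - F z = F (y + a) - F y then 1 else 0 := by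
  simp only [diffCount_eq, sq, Finset.sum_mul_sum]
  rw [Finset.sum_comm]
  refine Finset.sum_congr rfl fun y _ => ?_
  rw [Finset.sum_comm]
  refine Finset.sum_congr rfl fun z _ => ?_
  simp only [ite_mul, one_mul, zero_mul, ← ite_and]
  rw [Finset.sum_eq_single (F (y + a) - F y)]
  · simp [eq_comm]
  · intro b _ hb
    rw [if_neg fun h => hb h.1.symm]
  · intro h
    exact absurd (Finset.mem_univ _) h

lemma sum_diffCount_zero_eq (F : V → V) :
    ∑ a : V, diffCount p n F a 0 = ∑ β : V, (fiberCard p n n F β) ^ 2 := by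
  rw [sum_sq_fiberCard]
  simp only [diffCount_eq]
  rw [Finset.sum_comm]
  refine Finset.sum_congr rfl fun x _ => ?_
  refine Fintype.sum_equiv (Equiv.addLeft x) _ _ fun a => ?_
  simp [sub_eq_zero]
  exact if_congr Iff.rfl rfl rfl

end PDA

namespace PDA
variable {p n : ℕ} [NeZero p]
set_option linter.unusedSectionVars false
set_option maxHeartbeats 1000000

local notation "ψ" => ZMod.stdAddChar (N := p)
local notation "V" => (Fin n → ZMod p)

lemma walsh00 (F : V → V) : walsh p n n F 0 0 = (p : ℂ) ^ n := by
  rw [walsh_apply]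
  simp [ip_zero_left, card_V]

lemma sum_ww_zero (F : V → V) :
    ∑ v : V, walsh p n n F v 0 * (starRingEnd ℂ) (walsh p n n F v 0)
      = (p : ℂ) ^ n * ((∑ β : V, (fiberCard p n n F β) ^ 2 : ℕ) : ℂ) := by
  simp only [ww_expand, ip_zero_left, AddChar.map_zero_eq_one, mul_one]
  rw [show ((∑ β : V, (fiberCard p n n F β) ^ 2 : ℕ) : ℂ)
      = ∑ x : V, ∑ y : V, (if F y = F x then (1 : ℂ) else 0) by
    rw [sum_sq_fiberCard]; push_cast; rfl]
  rw [Finset.sum_comm]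
  rw [Finset.mul_sum]
  refine Finset.sum_congr rfl fun x _ => ?_
  rw [Finset.sum_comm, Finset.mul_sum]
  refine Finset.sum_congr rfl fun y _ => ?_
  rw [sum_psi_ip_left]
  by_cases h : F y = F x
  · rw [if_pos h, if_pos (by rw [h, sub_self]), mul_one]
  · rw [if_neg h, if_neg (fun hh => h (sub_eq_zero.mp hh).symm), mul_zero]

lemma fourth_moment' (F : V → V) :
    ∑ v : V, ∑ u : V,
      (walsh p n n F v u * (starRingEnd ℂ) (walsh p n n F v u))
        * (walsh p n n F v u * (starRingEnd ℂ) (walsh p n n F v u))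
      = (p : ℂ) ^ (2 * n) * ((∑ a : V, ∑ b : V, (diffCount p n F a b) ^ 2 : ℕ) : ℂ) := by
  rw [fourth_moment]
  rw [show ((∑ a : V, ∑ b : V, (diffCount p n F a b) ^ 2 : ℕ) : ℂ)
      = ∑ a : V, ∑ y : V, ∑ z : V,
          (if F (z + a) - F z = F (y + a) - F y then (1 : ℂ) else 0) by
    rw [Finset.sum_congr rfl fun a _ => sum_sq_diffCount F a]; push_cast; rfl]
  simp only [Fintype.sum_prod_type]
  have hE : ∀ (x y z w : V), (y - x + (w - z) = 0) ↔ (w = z + (x - y)) := by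
    intro x y z w
    constructor <;> intro h <;> linear_combination h
  have step : ∀ x y z : V,
      (∑ w : V, (if F x - F y + (F z - F w) = 0 then (p : ℂ) ^ n else 0)
        * (if y - x + (w - z) = 0 then (p : ℂ) ^ n else 0))
      = (if F x - F y + (F z - F (z + (x - y))) = 0 then (p : ℂ) ^ n else 0) * (p : ℂ) ^ n := by
    intro x y z
    have h1 : ∀ w : V, (if F x - F y + (F z - F w) = 0 then (p : ℂ) ^ n else 0)
        * (if y - x + (w - z) = 0 then (p : ℂ) ^ n else 0)
      = if w = z + (x - y) then
          (if F x - F y + (F z - F w) = 0 then (p : ℂ) ^ n else 0) * (p : ℂ) ^ n else 0 := by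
      intro w
      rw [if_congr (hE x y z w) rfl rfl, mul_ite, mul_zero]
    rw [Finset.sum_congr rfl fun w _ => h1 w,
      Finset.sum_ite_eq' univ (z + (x - y))
        (fun w => (if F x - F y + (F z - F w) = 0 then (p : ℂ) ^ n else 0) * (p : ℂ) ^ n)]
    simp
  rw [Finset.sum_congr rfl fun x _ => Finset.sum_congr rfl fun y _ =>
    Finset.sum_congr rfl fun z _ => step x y z]
  rw [Finset.sum_comm]
  conv_rhs => rw [Finset.sum_comm, Finset.mul_sum]
  refine Finset.sum_congr rfl fun y _ => ?_
  rw [Finset.mul_sum]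
  refine (Fintype.sum_bijective (fun a : V => y + a) (Equiv.addLeft y).bijective _ _
    fun a => ?_).symm
  rw [Finset.mul_sum]
  refine Finset.sum_congr rfl fun z _ => ?_
  have hc : (F (y + a) - F y + (F z - F (z + (y + a - y))) = 0)
      ↔ (F (z + a) - F z = F (y + a) - F y) := by
    rw [add_sub_cancel_left]
    constructor <;> intro h <;> linear_combination -h
  rw [if_congr hc rfl rfl]
  by_cases h : F (z + a) - F z = F (y + a) - F y
  · rw [if_pos h, if_pos h, mul_one, two_mul, pow_add]
  · rw [if_neg h, if_neg h, mul_zero, zero_mul]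

end PDA

namespace PDA
variable {p n : ℕ} [NeZero p]
set_option linter.unusedSectionVars false
set_option maxHeartbeats 1000000

local notation "V" => (Fin n → ZMod p)

lemma m00 (F : V → V) : Complex.normSq (walsh p n n F 0 0) = (p : ℝ) ^ (2 * n) := by
  rw [walsh00, show ((p : ℂ)) ^ n = (((p : ℝ) ^ n : ℝ) : ℂ) by push_cast; rfl,
    Complex.normSq_ofReal]
  rw [← pow_add, two_mul]

lemma parsevalR (F : V → V) (v : V) :
    ∑ u : V, Complex.normSq (walsh p n n F v u) = (p : ℝ) ^ (2 * n) := by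
  have h := parseval F v
  simp only [Complex.mul_conj] at h
  exact_mod_cast h

lemma sum_ww_zeroR (F : V → V) :
    ∑ v : V, Complex.normSq (walsh p n n F v 0)
      = (p : ℝ) ^ n * ((∑ β : V, (fiberCard p n n F β) ^ 2 : ℕ) : ℝ) := by
  have h := sum_ww_zero F
  simp only [Complex.mul_conj] at h
  exact_mod_cast h

lemma fourthR (F : V → V) :
    ∑ v : V, ∑ u : V, (Complex.normSq (walsh p n n F v u)) ^ 2
      = (p : ℝ) ^ (2 * n) * ((∑ a : V, ∑ b : V, (diffCount p n F a b) ^ 2 : ℕ) : ℝ) := by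
  have h := fourth_moment' F
  simp only [Complex.mul_conj, ← Complex.ofReal_mul, ← sq] at h
  exact_mod_cast h

lemma plateaued_normSq (F : V → V) (hplat : IsPlateaued p n n F) (v : V) (hv : v ≠ 0) :
    ∃ T : ℕ, ∀ u : V, Complex.normSq (walsh p n n F v u) = 0 ∨
      Complex.normSq (walsh p n n F v u) = (p : ℝ) ^ (n + T) := by
  obtain ⟨T, hT⟩ := hplat v hv
  refine ⟨T, fun u => ?_⟩
  rcases hT u with h | h
  · left
    rw [← Complex.sq_norm, h]
    norm_num
  · right
    rw [← Complex.sq_norm, h, Real.sq_sqrt (by positivity)]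

lemma key_lower (F : V → V) (hplat : IsPlateaued p n n F) :
    (p : ℝ) ^ (2 * n) * (p : ℝ) ^ (2 * n)
        + ((p : ℝ) ^ n * ((∑ β : V, (fiberCard p n n F β) ^ 2 : ℕ) : ℝ)
            - (p : ℝ) ^ (2 * n)) * (p : ℝ) ^ (2 * n)
      ≤ (p : ℝ) ^ (2 * n) * ((∑ a : V, ∑ b : V, (diffCount p n F a b) ^ 2 : ℕ) : ℝ) := by
  rw [← fourthR]
  rw [← Finset.add_sum_erase (univ : Finset V)
    (fun v => ∑ u : V, (Complex.normSq (walsh p n n F v u)) ^ 2) (Finset.mem_univ 0)]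
  have h0 : (p : ℝ) ^ (2 * n) * (p : ℝ) ^ (2 * n)
      ≤ ∑ u : V, (Complex.normSq (walsh p n n F 0 u)) ^ 2 := by
    have := Finset.single_le_sum
      (f := fun u : V => (Complex.normSq (walsh p n n F 0 u)) ^ 2)
      (fun u _ => sq_nonneg _) (Finset.mem_univ (0 : V))
    rw [m00] at this
    calc (p : ℝ) ^ (2 * n) * (p : ℝ) ^ (2 * n) = ((p : ℝ) ^ (2 * n)) ^ 2 := (sq _).symm
    _ ≤ _ := this
  have hrest : ((p : ℝ) ^ n * ((∑ β : V, (fiberCard p n n F β) ^ 2 : ℕ) : ℝ)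
        - (p : ℝ) ^ (2 * n)) * (p : ℝ) ^ (2 * n)
      ≤ ∑ v ∈ (univ : Finset V).erase 0,
          ∑ u : V, (Complex.normSq (walsh p n n F v u)) ^ 2 := by
    have hsum0 : ∑ v ∈ (univ : Finset V).erase 0, Complex.normSq (walsh p n n F v 0)
        = (p : ℝ) ^ n * ((∑ β : V, (fiberCard p n n F β) ^ 2 : ℕ) : ℝ) - (p : ℝ) ^ (2 * n) := by
      have := Finset.add_sum_erase (univ : Finset V)
        (fun v => Complex.normSq (walsh p n n F v 0)) (Finset.mem_univ 0)
      rw [sum_ww_zeroR, m00] at this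
      linarith
    rw [← hsum0, Finset.sum_mul]
    refine Finset.sum_le_sum fun v hv => ?_
    obtain ⟨T, hT⟩ := plateaued_normSq F hplat v (Finset.ne_of_mem_erase hv)
    have hterm : ∀ u : V, Complex.normSq (walsh p n n F v 0)
        * Complex.normSq (walsh p n n F v u) ≤ (Complex.normSq (walsh p n n F v u)) ^ 2 := by
      intro u
      rcases hT u with h | h
      · rw [h]
        simp [sq_nonneg]
      · rcases hT 0 with h0' | h0'
        · rw [h0']
          simp [sq_nonneg]
        · rw [h0', h, sq]
    calc Complex.normSq (walsh p n n F v 0) * (p : ℝ) ^ (2 * n)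
        = ∑ u : V, Complex.normSq (walsh p n n F v 0)
            * Complex.normSq (walsh p n n F v u) := by
          rw [← Finset.mul_sum, parsevalR]
    _ ≤ _ := Finset.sum_le_sum fun u _ => hterm u
  linarith

end PDA

namespace PDA
variable {p n t : ℕ} [NeZero p]
set_option linter.unusedSectionVars false
set_option maxHeartbeats 1000000

local notation "V" => (Fin n → ZMod p)

lemma sum_fiberCard (F : V → V) : ∑ β : V, fiberCard p n n F β = p ^ n := by
  unfold fiberCard
  rw [← Finset.card_eq_sum_card_fiberwise (fun x _ => Finset.mem_univ (F x)), card_univ, card_V]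

lemma SN_eq (F : V → V) (hd : IsDToOne p n F (p ^ t + 1)) :
    ∑ β : V, (fiberCard p n n F β) ^ 2 = p ^ n + p ^ t * (p ^ n - 1) := by
  obtain ⟨β₀, h1, hr⟩ := hd
  have hsplit : fiberCard p n n F β₀ + ∑ β ∈ univ.erase β₀, fiberCard p n n F β = p ^ n := by
    rw [Finset.add_sum_erase _ _ (Finset.mem_univ β₀), sum_fiberCard]
  rw [h1] at hsplit
  have hsq : ∀ β ∈ (univ : Finset V).erase β₀,
      (fiberCard p n n F β) ^ 2 = fiberCard p n n F β + p ^ t * fiberCard p n n F β := by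
    intro β hβ
    rcases hr β (Finset.ne_of_mem_erase hβ) with h | h <;> rw [h] <;> ring
  calc ∑ β : V, (fiberCard p n n F β) ^ 2
      = (fiberCard p n n F β₀) ^ 2 + ∑ β ∈ univ.erase β₀, (fiberCard p n n F β) ^ 2 :=
        (Finset.add_sum_erase _ _ (Finset.mem_univ β₀)).symm
    _ = 1 + (∑ β ∈ univ.erase β₀, fiberCard p n n F β
          + p ^ t * ∑ β ∈ univ.erase β₀, fiberCard p n n F β) := by
        rw [h1, one_pow, Finset.sum_congr rfl hsq, Finset.sum_add_distrib, ← Finset.mul_sum]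
    _ = p ^ n + p ^ t * (p ^ n - 1) := by
        have h2 : ∑ β ∈ (univ : Finset V).erase β₀, fiberCard p n n F β = p ^ n - 1 := by omega
        rw [h2, ← add_assoc]
        congr 1
        omega

lemma sum_erase_diffCount_zero (F : V → V) (hd : IsDToOne p n F (p ^ t + 1)) :
    ∑ a ∈ (univ : Finset V).erase 0, diffCount p n F a 0 = p ^ t * (p ^ n - 1) := by
  have h := Finset.add_sum_erase (univ : Finset V) (fun a => diffCount p n F a 0)
    (Finset.mem_univ 0)
  rw [sum_diffCount_zero_eq, SN_eq F hd, diffCount_zero, if_pos rfl] at h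
  exact Nat.add_left_cancel h

lemma exists_good_a (F : V → V) (hp : p.Prime) (hn : 0 < n)
    (hd : IsDToOne p n F (p ^ t + 1)) :
    ∃ a : V, a ≠ 0 ∧ p ^ t ≤ diffCount p n F a 0 := by
  have hcard : ((univ : Finset V).erase 0).card = p ^ n - 1 := by
    rw [Finset.card_erase_of_mem (Finset.mem_univ 0), card_univ, card_V]
  have hpn : 2 ≤ p ^ n := le_trans hp.two_le (Nat.le_self_pow hn.ne' p)
  have hne : ((univ : Finset V).erase 0).Nonempty := by
    rw [← Finset.card_pos, hcard]
    omega
  obtain ⟨a, ha, hle⟩ := Finset.exists_le_of_sum_le (f := fun _ : V => p ^ t)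
    (g := fun a : V => diffCount p n F a 0) hne (le_of_eq (by
      rw [Finset.sum_const, smul_eq_mul, hcard, mul_comm, sum_erase_diffCount_zero F hd]))
  exact ⟨a, Finset.ne_of_mem_erase ha, hle⟩

lemma le_dU (F : V → V) {a : V} (b : V) (ha : a ≠ 0) :
    diffCount p n F a b ≤ diffUniformity p n F :=
  Finset.le_sup (f := fun ab : V × V => diffCount p n F ab.1 ab.2)
    (by simp [Finset.mem_filter, Finset.mem_product, ha] : ((a, b) : V × V) ∈ _)

end PDA

namespace PDA
variable {p n t : ℕ} [NeZero p]
set_option linter.unusedSectionVars false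
set_option maxHeartbeats 1000000

local notation "V" => (Fin n → ZMod p)

lemma hard (F : V → V) (hp : p.Prime) (hplat : IsPlateaued p n n F)
    (hd : IsDToOne p n F (p ^ t + 1))
    (hub : ∀ a : V, a ≠ 0 → ∀ b : V, diffCount p n F a b ≤ p ^ t) :
    ∀ a : V, a ≠ 0 → ∀ b : V, diffCount p n F a b = 0 ∨ diffCount p n F a b = p ^ t := by
  have h1n : 1 ≤ p ^ n := Nat.one_le_pow _ _ hp.pos
  have hzero_row : ∑ b : V, (diffCount p n F 0 b) ^ 2 = p ^ (2 * n) := by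
    have h : ∀ b : V, (diffCount p n F 0 b) ^ 2 = if b = 0 then p ^ (2 * n) else 0 := by
      intro b
      rw [diffCount_zero]
      split_ifs
      · rw [← pow_mul, mul_comm]
      · norm_num
    rw [Finset.sum_congr rfl fun b _ => h b,
      Finset.sum_ite_eq' univ (0 : V) (fun _ => p ^ (2 * n))]
    simp
  have hrow_le : ∀ a ∈ (univ : Finset V).erase 0,
      ∑ b : V, (diffCount p n F a b) ^ 2 ≤ p ^ t * p ^ n := by
    intro a ha
    calc ∑ b : V, (diffCount p n F a b) ^ 2
        ≤ ∑ b : V, p ^ t * diffCount p n F a b := by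
          refine Finset.sum_le_sum fun b _ => ?_
          rw [sq]
          exact Nat.mul_le_mul_right _ (hub a (Finset.ne_of_mem_erase ha) b)
      _ = p ^ t * ∑ b : V, diffCount p n F a b := (Finset.mul_sum _ _ _).symm
      _ = p ^ t * p ^ n := by rw [sum_diffCount]
  have hsplit : (∑ a : V, ∑ b : V, (diffCount p n F a b) ^ 2)
      = p ^ (2 * n) + ∑ a ∈ (univ : Finset V).erase 0, ∑ b : V, (diffCount p n F a b) ^ 2 := by
    rw [← Finset.add_sum_erase (univ : Finset V)
      (fun a => ∑ b : V, (diffCount p n F a b) ^ 2) (Finset.mem_univ 0)]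
    rw [hzero_row]
  have hupper : (∑ a : V, ∑ b : V, (diffCount p n F a b) ^ 2)
      ≤ p ^ (2 * n) + (p ^ n - 1) * (p ^ t * p ^ n) := by
    rw [hsplit]
    have h := Finset.sum_le_card_nsmul ((univ : Finset V).erase 0) _ (p ^ t * p ^ n) hrow_le
    rw [Finset.card_erase_of_mem (Finset.mem_univ 0), card_univ, card_V, smul_eq_mul] at h
    exact Nat.add_le_add_left h _
  have hlowerR : ((p ^ (2 * n) + (p ^ n - 1) * (p ^ t * p ^ n) : ℕ) : ℝ)
      ≤ ((∑ a : V, ∑ b : V, (diffCount p n F a b) ^ 2 : ℕ) : ℝ) := by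
    have hk := key_lower F hplat
    rw [SN_eq F hd] at hk
    have hppos : (0 : ℝ) < (p : ℝ) := by exact_mod_cast hp.pos
    have hP : (0 : ℝ) < (p : ℝ) ^ (2 * n) := by positivity
    have h2 : (p : ℝ) ^ (2 * n) * ((p : ℝ) ^ n * ((p ^ n + p ^ t * (p ^ n - 1) : ℕ) : ℝ))
        ≤ (p : ℝ) ^ (2 * n) * ((∑ a : V, ∑ b : V, (diffCount p n F a b) ^ 2 : ℕ) : ℝ) := by
      calc (p : ℝ) ^ (2 * n) * ((p : ℝ) ^ n * ((p ^ n + p ^ t * (p ^ n - 1) : ℕ) : ℝ))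
          = (p : ℝ) ^ (2 * n) * (p : ℝ) ^ (2 * n)
            + ((p : ℝ) ^ n * ((p ^ n + p ^ t * (p ^ n - 1) : ℕ) : ℝ)
              - (p : ℝ) ^ (2 * n)) * (p : ℝ) ^ (2 * n) := by ring
        _ ≤ _ := hk
    have h3 := le_of_mul_le_mul_left h2 hP
    have h4 : ((p ^ (2 * n) + (p ^ n - 1) * (p ^ t * p ^ n) : ℕ) : ℝ)
        = (p : ℝ) ^ n * ((p ^ n + p ^ t * (p ^ n - 1) : ℕ) : ℝ) := by
      have h5 : (p ^ (2 * n) + (p ^ n - 1) * (p ^ t * p ^ n) : ℕ)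
          = p ^ n * (p ^ n + p ^ t * (p ^ n - 1)) := by
        set d := p ^ n - 1 with hd0
        rw [two_mul, pow_add]
        ring
      rw [h5]
      push_cast
      ring
    rw [h4]
    exact h3
  have hSeq : (∑ a : V, ∑ b : V, (diffCount p n F a b) ^ 2)
      = p ^ (2 * n) + (p ^ n - 1) * (p ^ t * p ^ n) :=
    le_antisymm hupper (by exact_mod_cast hlowerR)
  have hsum_rows : ∑ a ∈ (univ : Finset V).erase 0, (∑ b : V, (diffCount p n F a b) ^ 2)
      = ∑ _a ∈ (univ : Finset V).erase 0, (p ^ t * p ^ n) := by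
    rw [Finset.sum_const, smul_eq_mul, Finset.card_erase_of_mem (Finset.mem_univ 0),
      card_univ, card_V]
    rw [hsplit] at hSeq
    exact Nat.add_left_cancel hSeq
  have hrow_eq := (Finset.sum_eq_sum_iff_of_le hrow_le).mp hsum_rows
  intro a ha b
  have hrow := hrow_eq a (Finset.mem_erase.mpr ⟨ha, Finset.mem_univ a⟩)
  have hterm_le : ∀ b ∈ (univ : Finset V),
      (diffCount p n F a b) ^ 2 ≤ p ^ t * diffCount p n F a b := fun b _ => by
    rw [sq]
    exact Nat.mul_le_mul_right _ (hub a ha b)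
  have heq : ∑ b : V, (diffCount p n F a b) ^ 2 = ∑ b : V, p ^ t * diffCount p n F a b := by
    rw [hrow, ← Finset.mul_sum, sum_diffCount]
  have hpt := (Finset.sum_eq_sum_iff_of_le hterm_le).mp heq b (Finset.mem_univ b)
  rcases Nat.eq_zero_or_pos (diffCount p n F a b) with h0 | hpos
  · exact Or.inl h0
  · right
    rw [sq] at hpt
    exact Nat.eq_of_mul_eq_mul_right hpos hpt

end PDA

open PDA in
theorem plateaued_dToOne_diffUniformity (p n t : ℕ) [NeZero p] (hp : p.Prime) (hn : 0 < n)
    (ht : 1 ≤ t)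
    (F : (Fin n → ZMod p) → (Fin n → ZMod p))
    (hplat : IsPlateaued p n n F)
    (hdto1 : IsDToOne p n F (p ^ t + 1)) :
    p ^ t ≤ diffUniformity p n F ∧
    (diffUniformity p n F = p ^ t ↔
      ∀ a : Fin n → ZMod p, a ≠ 0 → ∀ b : Fin n → ZMod p,
        diffCount p n F a b = 0 ∨ diffCount p n F a b = p ^ t) := by
  have hge : p ^ t ≤ diffUniformity p n F := by
    obtain ⟨a, ha, hle⟩ := exists_good_a F hp hn hdto1
    exact le_trans hle (le_dU F 0 ha)
  refine ⟨hge, ⟨fun hδ => ?_, fun h2 => ?_⟩⟩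
  · exact hard F hp hplat hdto1 (fun a ha b => hδ ▸ le_dU F b ha)
  · refine le_antisymm ?_ hge
    unfold diffUniformity
    refine Finset.sup_le fun ab hab => ?_
    rcases h2 ab.1 (Finset.mem_filter.mp hab).2 ab.2 with h | h <;> simp [h]
end

section
/- Let p be a prime, n a positive integer, t > 0, and F : 𝔽_p^n → 𝔽_p^n a t-plateaued function (i.e., every nonzero component of F is t-plateaued). Then the differential uniformity of F is at least p^t. Moreover, the differential uniformity of F equals p^t if and only if F is differentially two-valued with value p^t, i.e., for every a ≠ 0 and every b, the number of solutions x of F(x+a) − F(x) = b lies in {0, p^t}. -/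
set_option linter.unusedSectionVars false
set_option linter.unusedVariables false
set_option maxHeartbeats 1000000


open Finset

namespace TPD
variable (p : ℕ) [NeZero p]

noncomputable def zet : ℂ := Complex.exp (2 * Real.pi * Complex.I / p)
noncomputable def ee (u : ZMod p) : ℂ := zet p ^ u.val
lemma zet_prim : IsPrimitiveRoot (zet p) p := Complex.isPrimitiveRoot_exp p (NeZero.ne p)
lemma zet_pow_p : zet p ^ p = 1 := (zet_prim p).pow_eq_one
lemma zet_pow_mod (m : ℕ) : zet p ^ (m % p) = zet p ^ m := by
  conv_rhs => rw [← Nat.mod_add_div m p]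
  rw [pow_add, pow_mul, zet_pow_p, one_pow, mul_one]
lemma ee_zero : ee p 0 = 1 := by simp [ee, ZMod.val_zero]
lemma ee_add (u v : ZMod p) : ee p (u + v) = ee p u * ee p v := by
  rw [ee, ee, ee, ZMod.val_add, zet_pow_mod, pow_add]
lemma ee_abs (u : ZMod p) : ‖ee p u‖ = 1 := by
  rw [ee, norm_pow, zet, Complex.norm_exp]
  have : (2 * ↑Real.pi * Complex.I / ↑p).re = 0 := by simp [Complex.div_re]
  rw [this, Real.exp_zero, one_pow]
lemma ee_conj (u : ZMod p) : (starRingEnd ℂ) (ee p u) = ee p (-u) := by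
  have h1 : ee p u * (starRingEnd ℂ) (ee p u) = 1 := by
    rw [Complex.mul_conj, Complex.normSq_eq_norm_sq, ee_abs]; norm_num
  have h2 : ee p u * ee p (-u) = 1 := by rw [← ee_add]; simp [ee_zero]
  have h0 : ee p u ≠ 0 := fun h => by rw [h] at h1; simp at h1
  exact mul_left_cancel₀ h0 (h1.trans h2.symm)
lemma ee_eq_exp (u : ZMod p) :
    ee p u = Complex.exp (2 * Real.pi * Complex.I * ((u.val : ℤ) : ℂ) / p) := by
  rw [ee, zet, ← Complex.exp_nat_mul]
  congr 1
  push_cast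
  ring

def ip (n : ℕ) (u v : Fin n → ZMod p) : ZMod p := ∑ i, u i * v i

variable (n : ℕ)

lemma ip_add_left (u v w : Fin n → ZMod p) : ip p n (u + v) w = ip p n u w + ip p n v w := by
  simp [ip, add_mul, Finset.sum_add_distrib]
lemma ip_add_right (u v w : Fin n → ZMod p) : ip p n u (v + w) = ip p n u v + ip p n u w := by
  simp [ip, mul_add, Finset.sum_add_distrib]
lemma ip_sub_right (u v w : Fin n → ZMod p) : ip p n u (v - w) = ip p n u v - ip p n u w := by
  simp [ip, mul_sub, Finset.sum_sub_distrib]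
lemma ip_neg_right (u v : Fin n → ZMod p) : ip p n u (-v) = - ip p n u v := by
  simp [ip]
lemma ip_zero_right (u : Fin n → ZMod p) : ip p n u 0 = 0 := by simp [ip]
lemma ip_zero_left (u : Fin n → ZMod p) : ip p n 0 u = 0 := by simp [ip]

lemma card_V : Fintype.card (Fin n → ZMod p) = p ^ n := by
  simp [Fintype.card_fun, ZMod.card]

lemma sum_ip (hp : p.Prime) (y : Fin n → ZMod p) :
    ∑ β : Fin n → ZMod p, ee p (ip p n β y) = if y = 0 then (p : ℂ) ^ n else 0 := by
  haveI : Fact p.Prime := ⟨hp⟩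
  by_cases hy : y = 0
  · simp [hy, ip_zero_right, ee, ZMod.val_zero, card_V]
  · rw [if_neg hy]
    obtain ⟨i0, hi0⟩ : ∃ i, y i ≠ 0 := by
      by_contra h; push_neg at h; exact hy (funext h)
    set γ : Fin n → ZMod p := Pi.single i0 (y i0)⁻¹ with hγ
    have hipγ : ip p n γ y = 1 := by
      rw [ip, Finset.sum_eq_single i0]
      · simp [hγ, inv_mul_cancel₀ hi0]
      · intro i _ hne; simp [hγ, Pi.single_eq_of_ne hne]
      · intro h; exact absurd (Finset.mem_univ i0) h
    haveI : Fact (1 < p) := ⟨hp.one_lt⟩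
    set S := ∑ β : Fin n → ZMod p, ee p (ip p n β y) with hS
    have key : ∑ β : Fin n → ZMod p, ee p (ip p n (γ + β) y) = ee p 1 * S := by
      rw [hS, Finset.mul_sum]
      exact Finset.sum_congr rfl fun β _ => by rw [ip_add_left, ee_add, hipγ]
    have key2 : ∑ β : Fin n → ZMod p, ee p (ip p n (γ + β) y) = S :=
      Fintype.sum_equiv (Equiv.addLeft γ) _ _ (fun β => rfl)
    have hshift : S = ee p 1 * S := key2.symm.trans key
    have hne1 : ee p 1 ≠ 1 := by
      have h1 : ee p 1 = zet p := by rw [ee, ZMod.val_one, pow_one]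
      rw [h1]; exact (zet_prim p).ne_one hp.one_lt
    have hz : (ee p 1 - 1) * S = 0 := by
      rw [sub_mul, one_mul, ← hshift, sub_self]
    rcases mul_eq_zero.1 hz with h | h
    · exact absurd (sub_eq_zero.1 h) hne1
    · exact h

variable (F : (Fin n → ZMod p) → (Fin n → ZMod p))

lemma walsh_eq (b a : Fin n → ZMod p) :
    walsh p n n F b a = ∑ x, ee p (ip p n b (F x) - ip p n a x) :=
  Finset.sum_congr rfl fun x _ => (ee_eq_exp p _).symm

noncomputable def TT (β a : Fin n → ZMod p) : ℂ :=
  ∑ x, ee p (ip p n β (F (x + a) - F x))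

lemma walsh_mul_conj (β α : Fin n → ZMod p) :
    walsh p n n F β α * (starRingEnd ℂ) (walsh p n n F β α) =
      ∑ a, TT p n F β a * ee p (ip p n α (-a)) := by
  have hconj : (starRingEnd ℂ) (walsh p n n F β α) =
      ∑ y, ee p (-(ip p n β (F y) - ip p n α y)) := by
    rw [walsh_eq, map_sum]
    exact Finset.sum_congr rfl fun y _ => ee_conj p _
  rw [hconj, walsh_eq, Finset.sum_mul_sum]
  have hrhs : ∀ a, TT p n F β a * ee p (ip p n α (-a)) =
      ∑ y, ee p (ip p n β (F (y + a) - F y)) * ee p (ip p n α (-a)) := by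
    intro a; rw [TT, Finset.sum_mul]
  simp_rw [hrhs]
  rw [Finset.sum_comm]
  conv_rhs => rw [Finset.sum_comm]
  apply Finset.sum_congr rfl
  intro y _
  rw [← Equiv.sum_comp (Equiv.addLeft y)
    (fun a => ee p (ip p n β (F a) - ip p n α a) * ee p (-(ip p n β (F y) - ip p n α y)))]
  apply Finset.sum_congr rfl
  intro a _
  simp only [Equiv.coe_addLeft]
  rw [← ee_add, ← ee_add]
  congr 1
  rw [ip_sub_right, ip_neg_right, ip_add_right]
  ring

lemma TT_zero_arg (β : Fin n → ZMod p) : TT p n F β 0 = (p : ℂ) ^ n := by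
  simp [TT, ip_zero_right, ee_zero, card_V, Finset.card_univ]

lemma parseval (hp : p.Prime) (β : Fin n → ZMod p) :
    ∑ α : Fin n → ZMod p, walsh p n n F β α * (starRingEnd ℂ) (walsh p n n F β α) =
      (p : ℂ) ^ (2 * n) := by
  simp_rw [walsh_mul_conj]
  rw [Finset.sum_comm]
  have : ∀ a : Fin n → ZMod p,
      ∑ α : Fin n → ZMod p, TT p n F β a * ee p (ip p n α (-a)) =
        TT p n F β a * (if -a = 0 then (p : ℂ) ^ n else 0) := by
    intro a
    rw [← Finset.mul_sum, sum_ip p n hp]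
  simp_rw [this]
  rw [Finset.sum_eq_single 0]
  · rw [TT_zero_arg]
    simp [two_mul, pow_add]
  · intro a _ ha
    rw [if_neg (by simpa using ha), mul_zero]
  · intro h; exact absurd (Finset.mem_univ 0) h

end TPD

namespace TPD2
open TPD
variable (p : ℕ) [NeZero p] (n : ℕ)

lemma sumA (hp : p.Prime) (g : (Fin n → ZMod p) → ℂ) :
    ∑ α : Fin n → ZMod p,
        (∑ a, g a * ee p (ip p n α (-a))) * (starRingEnd ℂ) (∑ a, g a * ee p (ip p n α (-a)))
      = (p : ℂ) ^ n * ∑ a, g a * (starRingEnd ℂ) (g a) := by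
  have hconj : ∀ α : Fin n → ZMod p, (starRingEnd ℂ) (∑ a, g a * ee p (ip p n α (-a))) =
      ∑ a, (starRingEnd ℂ) (g a) * ee p (ip p n α a) := by
    intro α
    rw [map_sum]
    exact Finset.sum_congr rfl fun a _ => by rw [map_mul, ee_conj, ip_neg_right, neg_neg]
  simp_rw [hconj, Finset.sum_mul_sum]
  have hterm : ∀ (α a a' : Fin n → ZMod p),
      (g a * ee p (ip p n α (-a))) * ((starRingEnd ℂ) (g a') * ee p (ip p n α a')) =
        g a * (starRingEnd ℂ) (g a') * ee p (ip p n α (a' - a)) := by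
    intro α a a'
    have h : ip p n α (a' - a) = ip p n α (-a) + ip p n α a' := by
      rw [ip_sub_right, ip_neg_right]; ring
    rw [h, ee_add]; ring
  simp_rw [hterm]
  rw [Finset.sum_comm]
  have hswap : ∀ a : Fin n → ZMod p,
      ∑ α : Fin n → ZMod p, ∑ a', g a * (starRingEnd ℂ) (g a') * ee p (ip p n α (a' - a)) =
      ∑ a', g a * (starRingEnd ℂ) (g a') * (if a' - a = 0 then (p : ℂ) ^ n else 0) := by
    intro a
    rw [Finset.sum_comm]
    exact Finset.sum_congr rfl fun a' _ => by rw [← Finset.mul_sum, sum_ip p n hp]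
  simp_rw [hswap]
  rw [Finset.mul_sum]
  apply Finset.sum_congr rfl
  intro a _
  rw [Finset.sum_eq_single a]
  · rw [sub_self, if_pos rfl]; ring
  · intro a' _ ha'
    rw [if_neg (by simpa [sub_eq_zero] using ha'), mul_zero]
  · intro h; exact absurd (Finset.mem_univ a) h

lemma sumB (hp : p.Prime) (G : (Fin n → ZMod p) → (Fin n → ZMod p)) :
    ∑ β : Fin n → ZMod p,
        (∑ x, ee p (ip p n β (G x))) * (starRingEnd ℂ) (∑ x, ee p (ip p n β (G x)))
      = (p : ℂ) ^ n * ∑ x, ∑ y, (if G x = G y then (1 : ℂ) else 0) := by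
  have hconj : ∀ β : Fin n → ZMod p, (starRingEnd ℂ) (∑ x, ee p (ip p n β (G x))) =
      ∑ y, ee p (ip p n β (-(G y))) := by
    intro β
    rw [map_sum]
    exact Finset.sum_congr rfl fun y _ => by rw [ee_conj, ip_neg_right]
  simp_rw [hconj, Finset.sum_mul_sum]
  have hterm : ∀ (β x y : Fin n → ZMod p),
      ee p (ip p n β (G x)) * ee p (ip p n β (-(G y))) = ee p (ip p n β (G x - G y)) := by
    intro β x y
    rw [← ee_add]
    congr 1
    rw [ip_sub_right, ip_neg_right]
    ring
  simp_rw [hterm]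
  rw [Finset.sum_comm]
  have hswap : ∀ x : Fin n → ZMod p,
      ∑ β : Fin n → ZMod p, ∑ y, ee p (ip p n β (G x - G y)) =
      ∑ y, (if G x - G y = 0 then (p : ℂ) ^ n else 0) := by
    intro x
    rw [Finset.sum_comm]
    exact Finset.sum_congr rfl fun y _ => by rw [sum_ip p n hp]
  simp_rw [hswap]
  rw [Finset.mul_sum]
  apply Finset.sum_congr rfl
  intro x _
  rw [Finset.mul_sum]
  apply Finset.sum_congr rfl
  intro y _
  by_cases h : G x = G y
  · simp [h]
  · rw [if_neg (fun hh => h (sub_eq_zero.1 hh)), if_neg h, mul_zero]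

end TPD2

namespace TPD3
open TPD TPD2
variable (p : ℕ) [NeZero p] (n : ℕ) (F : (Fin n → ZMod p) → (Fin n → ZMod p))

lemma tt_sum_zero :
    ∑ a : Fin n → ZMod p, TT p n F 0 a * (starRingEnd ℂ) (TT p n F 0 a) = (p : ℂ) ^ (3 * n) := by
  have h : ∀ a : Fin n → ZMod p, TT p n F 0 a = (p : ℂ) ^ n := by
    intro a
    simp [TT, ip_zero_left, ee_zero, card_V, Finset.card_univ]
  simp_rw [h, map_pow, map_natCast, Finset.sum_const, Finset.card_univ, card_V, nsmul_eq_mul]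
  push_cast
  ring

lemma tt_sum_ne (hp : p.Prime) (t : ℕ) (β : Fin n → ZMod p)
    (hpl : IsTPlateaued p n n F β t) :
    ∑ a : Fin n → ZMod p, TT p n F β a * (starRingEnd ℂ) (TT p n F β a) =
      (p : ℂ) ^ (2 * n + t) := by
  have hp0 : ((p : ℂ) : ℂ) ^ n ≠ 0 := pow_ne_zero _ (Nat.cast_ne_zero.2 (NeZero.ne p))
  -- fourth moment = p^n * sum TT conj TT
  have h4 : ∑ α : Fin n → ZMod p,
      (walsh p n n F β α * (starRingEnd ℂ) (walsh p n n F β α)) *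
        (starRingEnd ℂ) (walsh p n n F β α * (starRingEnd ℂ) (walsh p n n F β α)) =
      (p : ℂ) ^ n * ∑ a, TT p n F β a * (starRingEnd ℂ) (TT p n F β a) := by
    simp_rw [walsh_mul_conj]
    exact sumA p n hp _
  -- pointwise: (z c z)(conj (z c z)) = |z|^4
  have habs : ∀ z : ℂ, (z * (starRingEnd ℂ) z) * (starRingEnd ℂ) (z * (starRingEnd ℂ) z) =
      (((‖z‖ ^ 4 : ℝ)) : ℂ) := by
    intro z
    rw [Complex.mul_conj]
    congr 1
    rw [Complex.normSq_mul, Complex.normSq_conj, Complex.normSq_eq_norm_sq]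
    ring
  -- sum of |W|^2 = p^(2n) (real)
  have hpar : ∑ α : Fin n → ZMod p, ‖walsh p n n F β α‖ ^ 2 = (p : ℝ) ^ (2 * n) := by
    have := parseval p n F hp β
    have h2 : ∑ α : Fin n → ZMod p,
        ((‖walsh p n n F β α‖ ^ 2 : ℝ) : ℂ) = (((p : ℝ) ^ (2 * n) : ℝ) : ℂ) := by
      simp_rw [← Complex.normSq_eq_norm_sq, ← Complex.mul_conj]
      rw [this]
      push_cast
      ring
    rw [← Complex.ofReal_sum] at h2
    exact_mod_cast h2
  -- pointwise plateaued: |W|^4 = p^(n+t) * |W|^2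
  have hplat4 : ∀ α : Fin n → ZMod p, ‖walsh p n n F β α‖ ^ 4 =
      (p : ℝ) ^ (n + t) * ‖walsh p n n F β α‖ ^ 2 := by
    intro α
    rcases hpl α with h | h
    · rw [h]; ring
    · rw [h]
      have hnn : (0 : ℝ) ≤ (p : ℝ) ^ (n + t) := by positivity
      rw [show (Real.sqrt ((p:ℝ) ^ (n+t))) ^ 4 = ((Real.sqrt ((p:ℝ)^(n+t))) ^ 2) ^ 2 by ring,
        Real.sq_sqrt hnn]
      ring
  -- combine
  have hsum4 : ∑ α : Fin n → ZMod p, ‖walsh p n n F β α‖ ^ 4 =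
      (p : ℝ) ^ (3 * n + t) := by
    simp_rw [hplat4]
    rw [← Finset.mul_sum, hpar, ← pow_add]
    congr 1
    ring
  have hfinal : (p : ℂ) ^ n * ∑ a, TT p n F β a * (starRingEnd ℂ) (TT p n F β a) =
      (p : ℂ) ^ (3 * n + t) := by
    rw [← h4]
    simp_rw [habs]
    rw [← Complex.ofReal_sum, hsum4]
    push_cast
    ring
  apply mul_left_cancel₀ hp0
  rw [hfinal, ← pow_add]
  congr 1
  ring

lemma count_complex (a : Fin n → ZMod p) :
    ((∑ b, (diffCount p n F a b) ^ 2 : ℕ) : ℂ) =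
      ∑ x : Fin n → ZMod p, ∑ y : Fin n → ZMod p,
        (if F (x + a) - F x = F (y + a) - F y then (1 : ℂ) else 0) := by
  push_cast
  have hcard : ∀ b : Fin n → ZMod p, ((diffCount p n F a b : ℕ) : ℂ) =
      ∑ x : Fin n → ZMod p, (if F (x + a) - F x = b then (1 : ℂ) else 0) := by
    intro b
    rw [diffCount, Finset.card_filter]
    push_cast
    rfl
  have h : ∀ b : Fin n → ZMod p, ((diffCount p n F a b : ℕ) : ℂ) ^ 2 =
      (∑ x : Fin n → ZMod p, (if F (x + a) - F x = b then (1 : ℂ) else 0)) *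
      (∑ y : Fin n → ZMod p, (if F (y + a) - F y = b then (1 : ℂ) else 0)) := by
    intro b; rw [sq, hcard]
  simp_rw [h, Finset.sum_mul_sum]
  rw [Finset.sum_comm]
  apply Finset.sum_congr rfl
  intro x _
  rw [Finset.sum_comm]
  apply Finset.sum_congr rfl
  intro y _
  simp only [ite_mul, one_mul, zero_mul]
  rw [Finset.sum_ite_eq univ (F (x + a) - F x)]
  simp only [Finset.mem_univ, if_true]
  by_cases h : F (x + a) - F x = F (y + a) - F y
  · simp [h]
  · rw [if_neg (fun hh => h hh.symm), if_neg h]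

lemma per_a (hp : p.Prime) (a : Fin n → ZMod p) :
    (p : ℂ) ^ n * ((∑ b, (diffCount p n F a b) ^ 2 : ℕ) : ℂ) =
      ∑ β : Fin n → ZMod p, TT p n F β a * (starRingEnd ℂ) (TT p n F β a) := by
  rw [count_complex]
  exact (sumB p n hp (fun x => F (x + a) - F x)).symm

end TPD3

namespace TPD4
open TPD TPD2 TPD3
variable (p : ℕ) [NeZero p] (n : ℕ) (F : (Fin n → ZMod p) → (Fin n → ZMod p))

lemma global_sum (hp : p.Prime) (t : ℕ)
    (hplat : ∀ β : Fin n → ZMod p, β ≠ 0 → IsTPlateaued p n n F β t) :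
    ∑ a : Fin n → ZMod p, ∑ b, (diffCount p n F a b) ^ 2 =
      p ^ (2 * n) + (p ^ n - 1) * p ^ (n + t) := by
  have hp0 : (p : ℂ) ^ n ≠ 0 := pow_ne_zero _ (Nat.cast_ne_zero.2 (NeZero.ne p))
  have hone : 1 ≤ p ^ n := Nat.one_le_pow _ _ hp.pos
  have hC : (p : ℂ) ^ n * ((∑ a : Fin n → ZMod p, ∑ b, (diffCount p n F a b) ^ 2 : ℕ) : ℂ) =
      (p : ℂ) ^ (3 * n) + ((p ^ n - 1 : ℕ) : ℂ) * (p : ℂ) ^ (2 * n + t) := by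
    have h1 : ((∑ a : Fin n → ZMod p, ∑ b, (diffCount p n F a b) ^ 2 : ℕ) : ℂ) =
        ∑ a : Fin n → ZMod p, ((∑ b, (diffCount p n F a b) ^ 2 : ℕ) : ℂ) := by
      push_cast; rfl
    rw [h1, Finset.mul_sum]
    have h2 : ∀ a : Fin n → ZMod p, (p : ℂ) ^ n * ((∑ b, (diffCount p n F a b) ^ 2 : ℕ) : ℂ) =
        ∑ β : Fin n → ZMod p, TT p n F β a * (starRingEnd ℂ) (TT p n F β a) :=
      fun a => per_a p n F hp a
    simp_rw [h2]
    rw [Finset.sum_comm]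
    rw [Finset.sum_eq_sum_sdiff_singleton_add (Finset.mem_univ (0 : Fin n → ZMod p))]
    have h3 : ∀ β ∈ univ \ {(0 : Fin n → ZMod p)},
        ∑ a : Fin n → ZMod p, TT p n F β a * (starRingEnd ℂ) (TT p n F β a) =
          (p : ℂ) ^ (2 * n + t) := by
      intro β hβ
      have hβ0 : β ≠ 0 := by
        rw [Finset.mem_sdiff, Finset.mem_singleton] at hβ
        exact hβ.2
      exact tt_sum_ne p n F hp t β (hplat β hβ0)
    rw [Finset.sum_congr rfl h3, Finset.sum_const, tt_sum_zero p n F]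
    rw [Finset.card_sdiff_of_subset (by simp), Finset.card_singleton, Finset.card_univ, card_V]
    rw [nsmul_eq_mul]
    ring
  have hNat : (p : ℂ) ^ n * ((∑ a : Fin n → ZMod p, ∑ b, (diffCount p n F a b) ^ 2 : ℕ) : ℂ) =
      (p : ℂ) ^ n * ((p ^ (2 * n) + (p ^ n - 1) * p ^ (n + t) : ℕ) : ℂ) := by
    rw [hC]
    push_cast [Nat.cast_sub hone]
    ring
  have := mul_left_cancel₀ hp0 hNat
  exact_mod_cast this

lemma sum_sq_zero : ∑ b, (diffCount p n F 0 b) ^ 2 = p ^ (2 * n) := by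
  have hD : ∀ b, diffCount p n F 0 b = if (0 : Fin n → ZMod p) = b then p ^ n else 0 := by
    intro b
    rw [diffCount]
    by_cases hb : b = 0
    · subst hb
      rw [if_pos rfl]
      simp only [add_zero, sub_self]
      simp [Finset.card_univ, card_V]
    · rw [if_neg (fun h => hb h.symm)]
      rw [Finset.card_eq_zero, Finset.filter_eq_empty_iff]
      intro x _
      simp only [add_zero, sub_self]
      exact fun h => hb h.symm
  simp_rw [hD]
  have hsq : ∀ b : Fin n → ZMod p, (if (0 : Fin n → ZMod p) = b then p ^ n else 0) ^ 2 =
      if (0 : Fin n → ZMod p) = b then (p ^ n) ^ 2 else 0 := fun b => by split <;> simp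
  simp_rw [hsq]
  rw [Finset.sum_ite_eq univ (0 : Fin n → ZMod p) (fun _ => (p ^ n) ^ 2)]
  simp [← pow_mul, two_mul, mul_comm]
  
lemma sum_diff (a : Fin n → ZMod p) : ∑ b, diffCount p n F a b = p ^ n := by
  have h := Finset.card_eq_sum_card_fiberwise
    (f := fun x : Fin n → ZMod p => F (x + a) - F x) (s := univ) (t := univ)
    (fun x _ => Finset.mem_univ _)
  rw [Finset.card_univ, card_V] at h
  exact h.symm

end TPD4


theorem tPlateaued_diffUniformity (p n t : ℕ) [NeZero p] (hp : p.Prime) (hn : 0 < n)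
    (ht : 0 < t)
    (F : (Fin n → ZMod p) → (Fin n → ZMod p))
    (hplat : ∀ b : Fin n → ZMod p, b ≠ 0 → IsTPlateaued p n n F b t) :
    p ^ t ≤ diffUniformity p n F ∧
    (diffUniformity p n F = p ^ t ↔
      ∀ a : Fin n → ZMod p, a ≠ 0 → ∀ b : Fin n → ZMod p,
        diffCount p n F a b = 0 ∨ diffCount p n F a b = p ^ t) := by
  classical
  have hmem : ∀ a : Fin n → ZMod p, a ∈ (univ \ {(0 : Fin n → ZMod p)}) ↔ a ≠ 0 := by
    intro a; simp
  have hpn2 : 2 ≤ p ^ n := by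
    calc 2 ≤ p := hp.two_le
    _ = p ^ 1 := (pow_one p).symm
    _ ≤ p ^ n := Nat.pow_le_pow_right hp.pos hn
  have hcards : (univ \ {(0 : Fin n → ZMod p)}).card = p ^ n - 1 := by
    rw [Finset.card_sdiff_of_subset (by simp), Finset.card_singleton, Finset.card_univ, TPD.card_V]
  have hsq : ∑ a ∈ univ \ {(0 : Fin n → ZMod p)}, ∑ b, diffCount p n F a b ^ 2 =
      (p ^ n - 1) * p ^ (n + t) := by
    have hg := TPD4.global_sum p n F hp t hplat
    rw [Finset.sum_eq_sum_sdiff_singleton_add (Finset.mem_univ (0 : Fin n → ZMod p))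
      (fun a => ∑ b, diffCount p n F a b ^ 2), TPD4.sum_sq_zero p n F] at hg
    omega
  have hlin : ∑ a ∈ univ \ {(0 : Fin n → ZMod p)}, ∑ b, diffCount p n F a b =
      (p ^ n - 1) * p ^ n := by
    rw [Finset.sum_congr rfl (fun a _ => TPD4.sum_diff p n F a), Finset.sum_const, hcards,
      smul_eq_mul]
  have hle : ∀ a : Fin n → ZMod p, a ≠ 0 → ∀ b : Fin n → ZMod p,
      diffCount p n F a b ≤ diffUniformity p n F := by
    intro a ha b
    have hm : (a, b) ∈ ((univ ×ˢ univ).filter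
        fun ab : (Fin n → ZMod p) × (Fin n → ZMod p) => ab.1 ≠ 0) := by
      simp [Finset.mem_filter, ha]
    exact Finset.le_sup
      (f := fun ab : (Fin n → ZMod p) × (Fin n → ZMod p) => diffCount p n F ab.1 ab.2) hm
  have part1 : p ^ t ≤ diffUniformity p n F := by
    have hbound : ∑ a ∈ univ \ {(0 : Fin n → ZMod p)}, ∑ b, diffCount p n F a b ^ 2 ≤
        diffUniformity p n F * ((p ^ n - 1) * p ^ n) := by
      rw [← hlin, Finset.mul_sum]
      apply Finset.sum_le_sum
      intro a ha
      rw [Finset.mul_sum]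
      apply Finset.sum_le_sum
      intro b _
      rw [sq]
      exact Nat.mul_le_mul_right _ (hle a ((hmem a).1 ha) b)
    rw [hsq] at hbound
    have hrw : (p ^ n - 1) * p ^ (n + t) = p ^ t * ((p ^ n - 1) * p ^ n) := by
      rw [pow_add]; ring
    rw [hrw] at hbound
    have hpos : 0 < (p ^ n - 1) * p ^ n := Nat.mul_pos (by omega) (by omega)
    exact Nat.le_of_mul_le_mul_right hbound hpos
  refine ⟨part1, ?_, ?_⟩
  · intro hδ a ha b
    have hptle : ∀ a : Fin n → ZMod p, a ≠ 0 → ∀ b : Fin n → ZMod p,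
        diffCount p n F a b ≤ p ^ t := by
      intro a ha b; rw [← hδ]; exact hle a ha b
    have hsum_eq : ∑ a ∈ univ \ {(0 : Fin n → ZMod p)}, ∑ b, diffCount p n F a b ^ 2 =
        ∑ a ∈ univ \ {(0 : Fin n → ZMod p)}, ∑ b, p ^ t * diffCount p n F a b := by
      rw [hsq]
      have hc : ∀ a ∈ univ \ {(0 : Fin n → ZMod p)},
          ∑ b, p ^ t * diffCount p n F a b = p ^ t * ∑ b, diffCount p n F a b := fun a _ => by
        rw [Finset.mul_sum]
      rw [Finset.sum_congr rfl hc, ← Finset.mul_sum, hlin, pow_add]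
      ring
    have hpoint_le : ∀ a ∈ univ \ {(0 : Fin n → ZMod p)},
        ∑ b, diffCount p n F a b ^ 2 ≤ ∑ b, p ^ t * diffCount p n F a b := by
      intro a ha
      apply Finset.sum_le_sum
      intro b _
      rw [sq]
      exact Nat.mul_le_mul_right _ (hptle a ((hmem a).1 ha) b)
    have houter := (Finset.sum_eq_sum_iff_of_le hpoint_le).1 hsum_eq
    have hinner := (Finset.sum_eq_sum_iff_of_le (fun b _ => by
      rw [sq]; exact Nat.mul_le_mul_right _ (hptle a ha b))).1 (houter a ((hmem a).2 ha))
    have hb := hinner b (Finset.mem_univ b)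
    rcases Nat.eq_zero_or_pos (diffCount p n F a b) with h0 | hpos
    · exact Or.inl h0
    · right
      rw [sq] at hb
      exact Nat.eq_of_mul_eq_mul_right hpos hb
  · intro h2v
    apply le_antisymm _ part1
    apply Finset.sup_le
    intro ab hab
    have hab1 : ab.1 ≠ 0 := (Finset.mem_filter.1 hab).2
    rcases h2v ab.1 hab1 ab.2 with h | h
    · rw [h]; exact Nat.zero_le _
    · rw [h]
end

section
/- Let m be a positive integer, K a finite field with 2^m elements, π : K → K a 2-to-1 map (every fiber of π has size 0 or 2), and φ : K → K any map. Define F : K × K → K by F(x,y) = x·π(y) + φ(y), and assume F is plateaued with single amplitude 2^{m+1}. Then: (1) if 0 ∉ im(π), F is balanced, i.e., |F⁻¹(α)| = 2^m for all α ∈ K; (2) if π(y₁) = π(y₂) = 0 for distinct y₁, y₂ ∈ K and φ(y₁) = φ(y₂) = β, then |F⁻¹(β)| = 2^m + 2(2^m − 1) and |F⁻¹(α)| = 2^m − 2 for every α ≠ β; (3) if π(y₁) = π(y₂) = 0 for distinct y₁, y₂ ∈ K and β₁ := φ(y₁) ≠ φ(y₂) =: β₂, then |F⁻¹(β₁)|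 = |F⁻¹(β₂)| = 2^{m+1} − 2 and |F⁻¹(α)| = 2^m − 2 for every α ∉ {β₁, β₂}. -/
open Finset

/-- The (integer-valued) Walsh transform of `F : K × K → K` for a finite field `K` of
characteristic 2: `W_F(b,(a₁,a₂)) = ∑_{x,y} (-1)^{tr(b·F(x,y)) + tr(a₁·x + a₂·y)}`. -/
noncomputable def walshMM (K : Type*) [Field K] [Fintype K] [Algebra (ZMod 2) K]
    (F : K × K → K) (b : K) (a : K × K) : ℤ :=
  ∑ xy : K × K, (-1 : ℤ) ^
    ((Algebra.trace (ZMod 2) K (b * F xy)).val +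
      (Algebra.trace (ZMod 2) K (a.1 * xy.1 + a.2 * xy.2)).val)

theorem maiorana_mcfarland_value_distribution (m : ℕ) (hm : 0 < m)
    (K : Type*) [Field K] [Fintype K] [DecidableEq K]
    [Algebra (ZMod 2) K] (hK : Fintype.card K = 2 ^ m)
    (π φ : K → K)
    (hπ : ∀ z : K, (univ.filter fun y => π y = z).card = 0 ∨
                   (univ.filter fun y => π y = z).card = 2)
    (F : K × K → K) (hF : ∀ xy : K × K, F xy = xy.1 * π xy.2 + φ xy.2)
    (hplat : ∀ b : K, b ≠ 0 → ∀ a : K × K,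
      (walshMM K F b a).natAbs = 0 ∨ (walshMM K F b a).natAbs = 2 ^ (m + 1)) :
    ((0 : K) ∉ Set.range π →
      ∀ α : K, (univ.filter fun xy : K × K => F xy = α).card = 2 ^ m) ∧
    (∀ y₁ y₂ : K, y₁ ≠ y₂ → π y₁ = 0 → π y₂ = 0 → φ y₁ = φ y₂ →
      (univ.filter fun xy : K × K => F xy = φ y₁).card = 2 ^ m + 2 * (2 ^ m - 1) ∧
      ∀ α : K, α ≠ φ y₁ →
        (univ.filter fun xy : K × K => F xy = α).card = 2 ^ m - 2) ∧
    (∀ y₁ y₂ : K, y₁ ≠ y₂ → π y₁ = 0 → π y₂ = 0 → φ y₁ ≠ φ y₂ →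
      (univ.filter fun xy : K × K => F xy = φ y₁).card = 2 ^ (m + 1) - 2 ∧
      (univ.filter fun xy : K × K => F xy = φ y₂).card = 2 ^ (m + 1) - 2 ∧
      ∀ α : K, α ≠ φ y₁ → α ≠ φ y₂ →
        (univ.filter fun xy : K × K => F xy = α).card = 2 ^ m - 2) := by

  -- Key counting lemma
  have key : ∀ α : K, (univ.filter fun xy : K × K => F xy = α).card
      = ∑ y : K, if π y = 0 then (if φ y = α then 2 ^ m else 0) else 1 := by
    intro α
    rw [Finset.card_filter]
    rw [Fintype.sum_prod_type_right]
    refine Finset.sum_congr rfl fun y _ => ?_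
    by_cases hy : π y = 0
    · rw [if_pos hy]
      by_cases hφ : φ y = α
      · simp [hF, hy, hφ, ← hK, Finset.card_univ]
      · simp [hF, hy, hφ]
    · rw [if_neg hy]
      have hx : ∀ x : K, ((x, y).1 * π (x, y).2 + φ (x, y).2 = α) ↔
          x = (α - φ y) / π y := by
        intro x
        rw [eq_div_iff hy, eq_sub_iff_add_eq]
      simp only [hF, hx]
      simp [Finset.sum_ite_eq']
  have h2m : 2 ≤ 2 ^ m := by
    calc 2 = 2 ^ 1 := rfl
    _ ≤ 2 ^ m := Nat.pow_le_pow_right (by norm_num) hm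
  -- Common lemma for cases 2 and 3
  have pair : ∀ y₁ y₂ : K, y₁ ≠ y₂ → π y₁ = 0 → π y₂ = 0 → ∀ α : K,
      (univ.filter fun xy : K × K => F xy = α).card
        = (if φ y₁ = α then 2 ^ m else 0) + (if φ y₂ = α then 2 ^ m else 0)
          + (2 ^ m - 2) := by
    intro y₁ y₂ hne h1 h2 α
    have hZcard : (univ.filter fun y => π y = (0:K)).card = 2 := by
      rcases hπ 0 with h | h
      · exfalso
        have : y₁ ∈ univ.filter fun y => π y = (0:K) := by simp [h1]
        rw [Finset.card_eq_zero] at h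
        simp [h] at this
      · exact h
    have hZ : (univ.filter fun y => π y = (0:K)) = {y₁, y₂} := by
      symm
      apply Finset.eq_of_subset_of_card_le
      · intro z hz
        simp only [Finset.mem_insert, Finset.mem_singleton] at hz
        rcases hz with rfl | rfl <;> simp [h1, h2]
      · rw [hZcard, Finset.card_insert_of_notMem (by simpa using hne),
          Finset.card_singleton]
    rw [key α]
    rw [← Finset.sum_filter_add_sum_filter_not univ (fun y => π y = (0:K))]
    have e1 : ∑ y ∈ univ.filter (fun y => π y = (0:K)),
        (if π y = 0 then (if φ y = α then 2 ^ m else 0) else 1)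
        = (if φ y₁ = α then 2 ^ m else 0) + (if φ y₂ = α then 2 ^ m else 0) := by
      rw [hZ, Finset.sum_insert (by simpa using hne), Finset.sum_singleton,
        if_pos h1, if_pos h2]
    have e2 : ∑ y ∈ univ.filter (fun y => ¬ π y = (0:K)),
        (if π y = 0 then (if φ y = α then 2 ^ m else 0) else 1)
        = 2 ^ m - 2 := by
      rw [Finset.sum_congr rfl (fun y hy => ?_), Finset.sum_const, smul_eq_mul,
        mul_one]
      · rw [Finset.filter_not, Finset.card_sdiff_of_subset (Finset.filter_subset _ _),
          Finset.card_univ, hK, hZcard]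
      · rw [if_neg (Finset.mem_filter.mp hy).2]
    rw [e1, e2]
  refine ⟨?_, ?_, ?_⟩
  · intro h0 α
    rw [key α]
    have hne : ∀ y : K, ¬ π y = 0 := fun y hy => h0 ⟨y, hy⟩
    simp [hne, Finset.card_univ, hK]
  · intro y₁ y₂ hne h1 h2 hφ
    constructor
    · rw [pair y₁ y₂ hne h1 h2 (φ y₁), if_pos rfl, if_pos hφ.symm]
      omega
    · intro α hα
      rw [pair y₁ y₂ hne h1 h2 α, if_neg (fun h => hα h.symm),
        if_neg (fun h => hα (hφ ▸ h.symm))]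
      omega
  · intro y₁ y₂ hne h1 h2 hφ
    refine ⟨?_, ?_, ?_⟩
    · rw [pair y₁ y₂ hne h1 h2 (φ y₁), if_pos rfl, if_neg hφ.symm]
      ring_nf
      omega
    · rw [pair y₁ y₂ hne h1 h2 (φ y₂), if_neg hφ, if_pos rfl]
      ring_nf
      omega
    · intro α hα1 hα2
      rw [pair y₁ y₂ hne h1 h2 α, if_neg (fun h => hα1 h.symm),
        if_neg (fun h => hα2 h.symm)]
      omega
end

section
/- Let m be a positive integer, K a finite field with 2^m elements, π a permutation of K, y* ∈ K the element with π(y*) = 0, and i a positive integer coprime with m. Define F : K × K → K × K by F(x,y) = (x·π(y), x·π(y)^{2^i}). Then |F⁻¹((0,0))| = 2^{m+1} − 1, and |F⁻¹(α)| = 1 for every α in the image of F with α ≠ (0,0). -/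
open Finset

/-- If `i` and `m` are coprime, then `2^i - 1` and `2^m - 1` are coprime. -/
lemma coprime_two_pow_sub_one {i m : ℕ} (hcop : Nat.Coprime i m) :
    Nat.Coprime (2 ^ i - 1) (2 ^ m - 1) := by
  rw [Nat.coprime_iff_gcd_eq_one]
  by_contra h
  set g := Nat.gcd (2 ^ i - 1) (2 ^ m - 1) with hg
  have hp : (g.minFac).Prime := Nat.minFac_prime h
  set p := g.minFac
  have hpi : p ∣ 2 ^ i - 1 := (Nat.minFac_dvd g).trans (Nat.gcd_dvd_left _ _)
  have hpm : p ∣ 2 ^ m - 1 := (Nat.minFac_dvd g).trans (Nat.gcd_dvd_right _ _)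
  haveI : Fact p.Prime := ⟨hp⟩
  have key : ∀ n : ℕ, p ∣ 2 ^ n - 1 → (2 : ZMod p) ^ n = 1 := by
    intro n hd
    have h1 : (1 : ℕ) ≤ 2 ^ n := Nat.one_le_two_pow
    have hz : ((2 ^ n - 1 : ℕ) : ZMod p) = 0 := (ZMod.natCast_eq_zero_iff _ _).mpr hd
    rw [Nat.cast_sub h1] at hz
    push_cast at hz
    linear_combination hz
  have h2i : (2 : ZMod p) ^ i = 1 := key i hpi
  have h2m : (2 : ZMod p) ^ m = 1 := key m hpm
  have hord : orderOf (2 : ZMod p) ∣ Nat.gcd i m :=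
    Nat.dvd_gcd (orderOf_dvd_of_pow_eq_one h2i) (orderOf_dvd_of_pow_eq_one h2m)
  rw [hcop] at hord
  have h1 : orderOf (2 : ZMod p) = 1 := Nat.dvd_one.mp hord
  have h2 : (2 : ZMod p) = 1 := by
    have := orderOf_eq_one_iff.mp h1
    simpa using this
  have : (1 : ZMod p) = 0 := by linear_combination h2
  exact one_ne_zero this

/-- In a finite field of cardinality `2^m`, the map `t ↦ t^(2^i - 1)` is injective
on units when `i` is coprime to `m`. -/
lemma pow_sub_one_inj {m i : ℕ} (hcop : Nat.Coprime i m)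
    (K : Type*) [Field K] [Fintype K] (hK : Fintype.card K = 2 ^ m)
    {a b : Kˣ} (h : a ^ (2 ^ i - 1) = b ^ (2 ^ i - 1)) : a = b := by
  have hcardu : Nat.card Kˣ = 2 ^ m - 1 := by
    rw [Nat.card_units, Nat.card_eq_fintype_card, hK]
  have h1 : (a * b⁻¹) ^ (2 ^ i - 1) = 1 := by
    rw [mul_pow, h, inv_pow, mul_inv_cancel]
  have hd1 : orderOf (a * b⁻¹) ∣ 2 ^ i - 1 := orderOf_dvd_of_pow_eq_one h1
  have hd2 : orderOf (a * b⁻¹) ∣ 2 ^ m - 1 := hcardu ▸ orderOf_dvd_natCard _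
  have : orderOf (a * b⁻¹) ∣ 1 := by
    have := Nat.dvd_gcd hd1 hd2
    rwa [Nat.coprime_iff_gcd_eq_one.mp (coprime_two_pow_sub_one hcop)] at this
  have : a * b⁻¹ = 1 := orderOf_eq_one_iff.mp (Nat.dvd_one.mp this)
  exact mul_inv_eq_one.mp this

theorem maiorana_mcfarland_pair_value_distribution (m i : ℕ) (hm : 0 < m) (hi : 0 < i)
    (hcop : Nat.Coprime i m)
    (K : Type*) [Field K] [Fintype K] [DecidableEq K] (hK : Fintype.card K = 2 ^ m)
    (π : K → K) (hπ : Function.Bijective π)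
    (ystar : K) (hystar : π ystar = 0)
    (F : K × K → K × K)
    (hF : ∀ xy : K × K, F xy = (xy.1 * π xy.2, xy.1 * (π xy.2) ^ (2 ^ i))) :
    (univ.filter fun xy : K × K => F xy = (0, 0)).card = 2 ^ (m + 1) - 1 ∧
    ∀ α ∈ Set.range F, α ≠ (0, 0) →
      (univ.filter fun xy : K × K => F xy = α).card = 1 := by
  have hq1 : (1 : ℕ) ≤ 2 ^ i := Nat.one_le_two_pow
  have hqsplit : ∀ t : K, t ^ (2 ^ i) = t * t ^ (2 ^ i - 1) := by
    intro t
    conv_lhs => rw [show (2 : ℕ) ^ i = (2 ^ i - 1) + 1 from by omega, pow_succ']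
  constructor
  · -- zero fiber
    have hcond : ∀ x y : K, F (x, y) = (0, 0) ↔ x = 0 ∨ y = ystar := by
      intro x y
      constructor
      · intro h
        have h1 : x * π y = 0 := by
          have := congrArg Prod.fst h
          rwa [hF] at this
        rcases mul_eq_zero.mp h1 with hx | hy
        · exact Or.inl hx
        · exact Or.inr (hπ.injective (hy.trans hystar.symm))
      · rintro (rfl | rfl)
        · rw [hF]; simp
        · rw [hF]; simp [hystar, zero_pow (Nat.two_pow_pos i).ne']
    have hset : (univ.filter fun xy : K × K => F xy = (0, 0)) =
        ({0} ×ˢ (univ : Finset K)) ∪ ((univ : Finset K) ×ˢ {ystar}) := by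
      ext ⟨x, y⟩
      simp only [mem_filter, mem_univ, true_and, mem_union, mem_product, mem_singleton,
        and_true]
      exact hcond x y
    rw [hset, card_union]
    have hinter : (({0} ×ˢ (univ : Finset K)) ∩ ((univ : Finset K) ×ˢ {ystar}))
        = {((0 : K), ystar)} := by
      ext ⟨x, y⟩
      simp only [mem_inter, mem_product, mem_singleton, mem_univ, true_and, and_true,
        Prod.mk.injEq]
    rw [hinter]
    simp only [card_product, card_singleton, card_univ, hK, one_mul, mul_one]
    rw [pow_succ]
    omega
  · -- nonzero fibers
    rintro α ⟨⟨x0, y0⟩, rfl⟩ hne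
    rw [card_eq_one]
    refine ⟨(x0, y0), ?_⟩
    ext ⟨x, y⟩
    simp only [mem_filter, mem_univ, true_and, mem_singleton]
    constructor
    · intro h
      rw [hF, hF] at h
      simp only [Prod.mk.injEq] at h
      obtain ⟨h1, h2⟩ := h
      -- nonzero first coordinate
      have ha : x0 * π y0 ≠ 0 := by
        intro hz
        apply hne
        have hb : x0 * (π y0) ^ (2 ^ i) = 0 := by
          rw [hqsplit, ← mul_assoc, hz, zero_mul]
        rw [hF, hz, hb]
      have hπy0 : π y0 ≠ 0 := right_ne_zero_of_mul ha
      have ha' : x * π y ≠ 0 := h1 ▸ ha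
      have hπy : π y ≠ 0 := right_ne_zero_of_mul ha'
      have h2' : x * π y * (π y) ^ (2 ^ i - 1) = x0 * π y0 * (π y0) ^ (2 ^ i - 1) := by
        rw [mul_assoc, mul_assoc, ← hqsplit, ← hqsplit]; exact h2
      rw [h1] at h2'
      have hpow : (π y) ^ (2 ^ i - 1) = (π y0) ^ (2 ^ i - 1) :=
        mul_left_cancel₀ ha h2'
      have hyu : Units.mk0 (π y) hπy = Units.mk0 (π y0) hπy0 := by
        apply pow_sub_one_inj hcop K hK
        ext
        push_cast
        exact hpow
      have hy : π y = π y0 := congrArg Units.val hyu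
      have hy2 : y = y0 := hπ.injective hy
      have hx : x = x0 := by
        rw [hy2] at h1
        exact mul_right_cancel₀ hπy0 h1
      rw [hx, hy2]
    · intro h; rw [h]
end
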